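/- arXiv:2302.07423 — 9 statements merged into one kernel-verified Lean document; each statement's English description precedes it below -/
import Mathlib

section
/- Let d ≥ 1 and let w_1, …, w_{d+1} ∈ ℝ^d be affinely independent points such that the origin 0 lies in the interior of conv({w_1, …, w_{d+1}}). For each j ∈ {1, …, d+1} let C_j be the set of all nonnegative linear combinations of the vectors {−w_i : i ≠ j}. Then the cones C_1, …, C_{d+1} cover ℝ^d, i.e., every x ∈ ℝ^d lies in C_j for some j. -/
open Finset

lemma conv_mem_aux {n : ℕ} {E : Type*} [AddCommGroup E] [Module ℝ E]
    (v : Fin n → E) {y : E} (hy : y ∈ convexHull ℝ (Set.range v)) :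
    ∃ ν : Fin n → ℝ, (∀ i, 0 ≤ ν i) ∧ (∑ i, ν i = 1) ∧ ∑ i, ν i • v i = y := by
  rw [convexHull_range_eq_exists_affineCombination] at hy
  obtain ⟨s, W, h0, h1, h2⟩ := hy
  refine ⟨fun i => if i ∈ s then W i else 0, fun i => ?_, ?_, ?_⟩
  · show (0:ℝ) ≤ if i ∈ s then W i else 0
    split <;> [exact h0 _ ‹_›; rfl]
  · rw [← h1, Finset.sum_ite_mem, Finset.univ_inter]
  · rw [← h2, Finset.affineCombination_eq_linear_combination _ _ _ h1]
    simp only [ite_smul, zero_smul]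
    rw [Finset.sum_ite_mem, Finset.univ_inter]

theorem stmt2 {d : ℕ} (hd : 1 ≤ d) (w : Fin (d + 1) → EuclideanSpace ℝ (Fin d))
    (hindep : AffineIndependent ℝ w)
    (h0 : (0 : EuclideanSpace ℝ (Fin d)) ∈ interior (convexHull ℝ (Set.range w))) :
    ∀ x : EuclideanSpace ℝ (Fin d), ∃ j : Fin (d + 1), ∃ c : Fin (d + 1) → ℝ,
      (∀ i, 0 ≤ c i) ∧ x = ∑ i ∈ Finset.univ.erase j, c i • (-(w i)) := by
  -- the span of the wᵢ is everything
  have hconv_sub : convexHull ℝ (Set.range w) ⊆ (Submodule.span ℝ (Set.range w) : Set _) :=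
    convexHull_min Submodule.subset_span (Submodule.span ℝ (Set.range w)).convex
  have hspan : Submodule.span ℝ (Set.range w) = ⊤ := by
    apply Submodule.eq_top_of_nonempty_interior'
    exact ⟨0, interior_mono hconv_sub h0⟩
  -- existence of strictly positive lam with ∑ lam i • w i = 0
  obtain ⟨ε, hε, hball⟩ := Metric.mem_nhds_iff.mp (mem_interior_iff_mem_nhds.mp h0)
  have key : ∀ i : Fin (d + 1), ∃ μ : Fin (d + 1) → ℝ,
      (∀ k, 0 ≤ μ k) ∧ 0 < μ i ∧ ∑ k, μ k • w k = 0 := by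
    intro i
    by_cases hwi : w i = 0
    · obtain ⟨ν, hν0, hν1, hνs⟩ := conv_mem_aux w (interior_subset h0)
      refine ⟨fun k => ν k + if k = i then 1 else 0, fun k => ?_, ?_, ?_⟩
      · show (0:ℝ) ≤ ν k + if k = i then 1 else 0
        have := hν0 k; split <;> linarith
      · have := hν0 i; simp; linarith
      · rw [Finset.sum_congr rfl (fun k _ => add_smul (ν k) _ (w k)), Finset.sum_add_distrib, hνs]
        simp [hwi]
    · set δ : ℝ := ε / (2 * ‖w i‖) with hδ
      have hn : 0 < ‖w i‖ := norm_pos_iff.mpr hwi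
      have hδpos : 0 < δ := div_pos hε (by linarith)
      have hmem : -(δ • w i) ∈ convexHull ℝ (Set.range w) := by
        apply hball
        rw [Metric.mem_ball, dist_zero_right, norm_neg, norm_smul, Real.norm_eq_abs,
          abs_of_pos hδpos]
        have hkey : δ * ‖w i‖ = ε / 2 := by
          rw [hδ]; field_simp
        rw [hkey]; linarith
      obtain ⟨ν, hν0, hν1, hνs⟩ := conv_mem_aux w hmem
      refine ⟨fun k => ν k + if k = i then δ else 0, fun k => ?_, ?_, ?_⟩
      · show (0:ℝ) ≤ ν k + if k = i then δ else 0
        have := hν0 k; split <;> linarith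
      · have := hν0 i; simp; linarith
      · rw [Finset.sum_congr rfl (fun k _ => add_smul (ν k) _ (w k)), Finset.sum_add_distrib, hνs]
        simp [Finset.sum_ite_eq']
  choose μ hμ0 hμpos hμsum using key
  set lam : Fin (d + 1) → ℝ := fun k => ∑ i, μ i k with hlam
  have hlampos : ∀ k, 0 < lam k := by
    intro k
    apply Finset.sum_pos' (fun i _ => hμ0 i k) ⟨k, Finset.mem_univ k, hμpos k⟩
  have hlamsum : ∑ k, lam k • w k = 0 := by
    simp only [hlam, Finset.sum_smul]
    rw [Finset.sum_comm]
    simp [hμsum]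
  -- main argument
  intro x
  have hx : -x ∈ Submodule.span ℝ (Set.range w) := by rw [hspan]; trivial
  obtain ⟨b, hb⟩ := (Submodule.mem_span_range_iff_exists_fun ℝ).mp hx
  obtain ⟨j, -, hj⟩ := Finset.exists_max_image Finset.univ (fun i => -b i / lam i)
    ⟨0, Finset.mem_univ 0⟩
  set t : ℝ := -b j / lam j with ht
  set c : Fin (d + 1) → ℝ := fun i => b i + t * lam i with hc
  have hc0 : ∀ i, 0 ≤ c i := by
    intro i
    have h1 : -b i / lam i ≤ t := hj i (Finset.mem_univ i)
    have h2 : -b i ≤ t * lam i := by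
      rw [div_le_iff₀ (hlampos i)] at h1
      linarith
    simp only [hc]; linarith
  have hcj : c j = 0 := by
    show b j + -b j / lam j * lam j = 0
    rw [div_mul_cancel₀ _ (hlampos j).ne']
    ring
  refine ⟨j, c, hc0, ?_⟩
  have hsum : ∑ i ∈ Finset.univ.erase j, c i • (-(w i)) = ∑ i, c i • (-(w i)) := by
    apply Finset.sum_erase
    rw [hcj, zero_smul]
  rw [hsum]
  have : ∑ i, c i • (-(w i)) = -(∑ i, b i • w i) - t • ∑ i, lam i • w i := by
    rw [Finset.smul_sum, ← Finset.sum_neg_distrib, ← Finset.sum_sub_distrib]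
    apply Finset.sum_congr rfl
    intro i _
    simp only [hc, smul_neg, smul_smul, add_smul]
    module
  rw [this, hb, hlamsum]
  simp
end

section
/- Let d ≥ 2 and let P ⊂ ℝ^d be a set of n points in general position that is not in convex position, and let p ∈ P be a point with p ∈ conv(P \ {p}). Then there exist d points p_1, …, p_d ∈ P \ {p} and a subset U ⊆ P \ {p_1, …, p_d, p} with |U| ≥ (n−1)/(d+1) such that for every q ∈ U, the point p lies in the interior of the simplex conv({p_1, …, p_d, q}); in particular, {p_1, …, p_d, p, q} is not in convex position for every q ∈ U. -/
open scoped Classical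

/-- A finite set `P ⊆ ℝ^d` is in convex position if no point of `P` lies in the
convex hull of the other points. -/
def InConvexPosition {d : ℕ} (P : Finset (EuclideanSpace ℝ (Fin d))) : Prop :=
  ∀ p ∈ P, p ∉ convexHull ℝ ((P.erase p : Finset (EuclideanSpace ℝ (Fin d))) : Set (EuclideanSpace ℝ (Fin d)))

/-- A finite set `P ⊆ ℝ^d` is in general position if every subset of size at most `d+1`
is affinely independent. -/
def InGeneralPosition {d : ℕ} (P : Finset (EuclideanSpace ℝ (Fin d))) : Prop :=
  ∀ Q ⊆ P, Q.card ≤ d + 1 →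
    AffineIndependent ℝ (fun q : (Q : Set (EuclideanSpace ℝ (Fin d))) => (q : EuclideanSpace ℝ (Fin d)))

/-- From general position, any injective family of at most `d+1` points of `P` is affinely
independent. -/
lemma gen_fam {d m : ℕ} {P : Finset (EuclideanSpace ℝ (Fin d))}
    (hgen : InGeneralPosition P) (u : Fin m → EuclideanSpace ℝ (Fin d))
    (hu : Function.Injective u) (huP : ∀ k, u k ∈ P) (hm : m ≤ d + 1) :
    AffineIndependent ℝ u := by
  classical
  set Q : Finset (EuclideanSpace ℝ (Fin d)) := Finset.image u Finset.univ with hQ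
  have hmem : ∀ k, u k ∈ Q := fun k => Finset.mem_image_of_mem u (Finset.mem_univ k)
  have hQP : Q ⊆ P := by
    intro x hx
    simp only [hQ, Finset.mem_image] at hx
    obtain ⟨k, -, rfl⟩ := hx
    exact huP k
  have hcard : Q.card = m := by
    rw [hQ, Finset.card_image_of_injective _ hu, Finset.card_univ, Fintype.card_fin]
  have hind := hgen Q hQP (by omega)
  let e : Fin m → (Q : Set (EuclideanSpace ℝ (Fin d))) := fun k => ⟨u k, hmem k⟩
  have hebij : Function.Bijective e := by
    rw [Fintype.bijective_iff_injective_and_card]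
    constructor
    · intro a b hab
      exact hu (congrArg Subtype.val hab)
    · simp [hcard]
  exact hind.comp_embedding (Equiv.ofBijective e hebij).toEmbedding

/-- From general position, a point of `P` not among an injective family of at most `d`
points of `P` is not in their affine span. -/
lemma not_mem_span_gen {d m : ℕ} {P : Finset (EuclideanSpace ℝ (Fin d))}
    (hgen : InGeneralPosition P) {p : EuclideanSpace ℝ (Fin d)} (hp : p ∈ P)
    (u : Fin m → EuclideanSpace ℝ (Fin d)) (hu : Function.Injective u)
    (huP : ∀ k, u k ∈ P) (hpu : p ∉ Set.range u) (hm : m ≤ d) :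
    p ∉ affineSpan ℝ (Set.range u) := by
  classical
  have hind := gen_fam hgen (Fin.cons p u : Fin (m+1) → _)
      (Fin.cons_injective_of_injective hpu hu)
      (fun k => by refine Fin.cases ?_ ?_ k <;> simp [hp, huP]) (by omega)
  have h0 := hind.notMem_affineSpan_diff 0 Set.univ
  have himg : (Fin.cons p u : Fin (m+1) → _) '' (Set.univ \ {0}) = Set.range u := by
    ext x
    constructor
    · rintro ⟨k, ⟨-, hk0⟩, rfl⟩
      simp only [Set.mem_singleton_iff] at hk0
      obtain ⟨j, rfl⟩ : ∃ j : Fin m, j.succ = k := ⟨k.pred hk0, Fin.succ_pred k hk0⟩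
      exact ⟨j, by simp⟩
    · rintro ⟨j, rfl⟩
      exact ⟨j.succ, ⟨trivial, by simp [Fin.succ_ne_zero]⟩, by simp⟩
  rw [himg] at h0
  simpa using h0

/-- A point which is an affine combination lies in the affine span. -/
lemma mem_span_combo {d m : ℕ} (u : Fin m → EuclideanSpace ℝ (Fin d)) (w : Fin m → ℝ)
    (hw : ∑ k, w k = 1) {x : EuclideanSpace ℝ (Fin d)} (hx : ∑ k, w k • u k = x) :
    x ∈ affineSpan ℝ (Set.range u) := by
  have h := affineCombination_mem_affineSpan (k := ℝ) (s := Finset.univ) hw u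
  rwa [Finset.univ.affineCombination_eq_linear_combination u w hw, hx] at h

theorem stmt3 {d n : ℕ} (hd : 2 ≤ d) (P : Finset (EuclideanSpace ℝ (Fin d)))
    (hn : P.card = n) (hgen : InGeneralPosition P) (hnoncvx : ¬ InConvexPosition P)
    (p : EuclideanSpace ℝ (Fin d)) (hp : p ∈ P)
    (hpint : p ∈ convexHull ℝ ((P.erase p : Finset (EuclideanSpace ℝ (Fin d))) : Set (EuclideanSpace ℝ (Fin d)))) :
    ∃ f : Fin d → EuclideanSpace ℝ (Fin d), Function.Injective f ∧ (∀ i, f i ∈ P.erase p) ∧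
      ∃ U : Finset (EuclideanSpace ℝ (Fin d)),
        U ⊆ P \ insert p (Finset.image f Finset.univ) ∧
        ((n : ℝ) - 1) / (d + 1) ≤ (U.card : ℝ) ∧
        ∀ q ∈ U,
          p ∈ interior (convexHull ℝ (insert q (Set.range f))) ∧
          ¬ InConvexPosition (insert q (insert p (Finset.image f Finset.univ))) := by
  classical
  obtain ⟨ι, hι, z, w, hzP, hzind, hwpos, hwsum, hzsum⟩ :=
    eq_pos_convex_span_of_mem_convexHull hpint
  letI := hι
  have hzPE : ∀ i, z i ∈ P.erase p := fun i => by exact_mod_cast hzP ⟨i, rfl⟩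
  have hzP' : ∀ i, z i ∈ P := fun i => Finset.mem_of_mem_erase (hzPE i)
  have hznep : ∀ i, z i ≠ p := fun i => Finset.ne_of_mem_erase (hzPE i)
  have hcard_le : Fintype.card ι ≤ d + 1 := by
    have h1 := hzind.card_le_finrank_succ
    have h2 : Module.finrank ℝ (vectorSpan ℝ (Set.range z)) ≤ d := by
      have h3 := Submodule.finrank_le (vectorSpan ℝ (Set.range z))
      simpa [finrank_euclideanSpace_fin] using h3
    omega
  have hnospan : ∀ m, m ≤ d → ∀ u : Fin m → EuclideanSpace ℝ (Fin d), Function.Injective u →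
      (∀ k, u k ∈ P) → (∀ k, u k ≠ p) → p ∉ affineSpan ℝ (Set.range u) := by
    intro m hm u hui huP hune
    exact not_mem_span_gen hgen hp u hui huP (by rintro ⟨k, hk⟩; exact hune k hk) hm
  have hcard : Fintype.card ι = d + 1 := by
    by_contra hne
    have hmle : Fintype.card ι ≤ d := by omega
    set m := Fintype.card ι with hm
    let e : Fin m ≃ ι := (Fintype.equivFin ι).symm
    refine hnospan m hmle (z ∘ e) (hzind.injective.comp e.injective)
      (fun k => hzP' _) (fun k => hznep _) ?_
    refine mem_span_combo (z ∘ e) (w ∘ e) ?_ ?_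
    · simp only [Function.comp_apply]
      rw [Equiv.sum_comp e w]; exact hwsum
    · simp only [Function.comp_apply]
      rw [Equiv.sum_comp e (fun i => w i • z i)]; exact hzsum
  let e : Fin (d + 1) ≃ ι := (Fintype.equivFinOfCardEq hcard).symm
  set v : Fin (d + 1) → EuclideanSpace ℝ (Fin d) := z ∘ e with hv
  set lam : Fin (d + 1) → ℝ := w ∘ e with hlam
  have hvinj : Function.Injective v := hzind.injective.comp e.injective
  have hvPE : ∀ k, v k ∈ P.erase p := fun k => hzPE _
  have hvP : ∀ k, v k ∈ P := fun k => hzP' _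
  have hvnep : ∀ k, v k ≠ p := fun k => hznep _
  have hlpos : ∀ k, 0 < lam k := fun k => hwpos _
  have hlsum : ∑ k, lam k = 1 := by
    rw [hlam]; simp only [Function.comp_apply]; rw [Equiv.sum_comp e w]; exact hwsum
  have hlp : ∑ k, lam k • v k = p := by
    rw [hlam, hv]; simp only [Function.comp_apply]
    rw [Equiv.sum_comp e (fun i => w i • z i)]; exact hzsum
  have hvind : AffineIndependent ℝ v := gen_fam hgen v hvinj hvP le_rfl
  have hvtot : affineSpan ℝ (Set.range v) = ⊤ := by
    rw [hvind.affineSpan_eq_top_iff_card_eq_finrank_add_one]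
    simp [finrank_euclideanSpace_fin]
  let B : AffineBasis (Fin (d + 1)) ℝ (EuclideanSpace ℝ (Fin d)) := ⟨v, hvind, hvtot⟩
  have hcoordgen : ∀ (B' : AffineBasis (Fin (d + 1)) ℝ (EuclideanSpace ℝ (Fin d)))
      (x : EuclideanSpace ℝ (Fin d)) (ω : Fin (d + 1) → ℝ),
      ∑ k, ω k = 1 → ∑ k, ω k • B' k = x → ∀ k, B'.coord k x = ω k := by
    intro B' x ω hs hx k
    have hx' : Finset.univ.affineCombination ℝ (B' : Fin (d + 1) → _) ω = x := by
      rw [Finset.univ.affineCombination_eq_linear_combination _ _ hs]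
      exact hx
    rw [← hx', B'.coord_apply_combination_of_mem (Finset.mem_univ k) hs]
  have hcoordp : ∀ k, B.coord k p = lam k := hcoordgen B p lam hlsum hlp
  have hcoordv : ∀ m k : Fin (d + 1), B.coord m (v k) = if m = k then 1 else 0 :=
    fun m k => B.coord_apply m k
  have hq_comb : ∀ x : EuclideanSpace ℝ (Fin d), ∑ k, B.coord k x • v k = x := fun x =>
    B.linear_combination_coord_eq_self x
  -- the positive-coordinate index set is nonempty
  have hgex : ∀ q : EuclideanSpace ℝ (Fin d),
      ∃ i, i ∈ Finset.univ.filter (fun k => 0 < B.coord k q) ∧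
        ∀ j ∈ Finset.univ.filter (fun k => 0 < B.coord k q),
          lam i / B.coord i q ≤ lam j / B.coord j q := by
    intro q
    apply Finset.exists_min_image
    have : ∃ k, 0 < B.coord k q := by
      by_contra h
      push_neg at h
      have hle : ∑ k, B.coord k q ≤ 0 := Finset.sum_nonpos fun k _ => h k
      rw [B.sum_coord_apply_eq_one q] at hle
      linarith
    obtain ⟨k, hk⟩ := this
    exact ⟨k, by simp [hk]⟩
  choose g hgmem hgmin using hgex
  have hgpos : ∀ q, 0 < B.coord (g q) q := by
    intro q
    have := hgmem q
    simp only [Finset.mem_filter] at this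
    exact this.2
  have hK1 : ∀ k, g (v k) = k := by
    intro k
    by_contra hne
    have h1 := hgpos (v k)
    rw [hcoordv] at h1
    simp [hne] at h1
  -- the key sum computations
  have hOmega : ∀ (q : EuclideanSpace ℝ (Fin d)) (i : Fin (d + 1)) (c : ℝ),
      lam i = c * B.coord i q →
      (∑ k, ((lam k - c * B.coord k q) + if k = i then c else 0) = 1) ∧
      (∑ k, ((lam k - c * B.coord k q) + if k = i then c else 0) •
        (if k = i then q else v k) = p) := by
    intro q i c hci
    constructor
    · rw [Finset.sum_add_distrib]
      have h1 : ∑ k, (lam k - c * B.coord k q) = 1 - c := by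
        rw [Finset.sum_sub_distrib, hlsum, ← Finset.mul_sum, B.sum_coord_apply_eq_one, mul_one]
      have h2 : ∑ k : Fin (d + 1), (if k = i then c else 0) = c := by simp
      rw [h1, h2]; ring
    · have key : ∀ k, ((lam k - c * B.coord k q) + if k = i then c else 0) •
          (if k = i then q else v k)
          = (lam k - c * B.coord k q) • v k + (if k = i then c else 0) • q := by
        intro k
        by_cases hk : k = i
        · subst hk
          simp only [if_pos rfl]
          rw [hci]
          simp
        · simp [hk]
      rw [Finset.sum_congr rfl (fun k _ => key k), Finset.sum_add_distrib]
      have h1 : ∑ k, (lam k - c * B.coord k q) • v k = p - c • q := by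
        have hterm : ∀ k : Fin (d + 1), (lam k - c * B.coord k q) • v k
            = lam k • v k - c • (B.coord k q • v k) := by
          intro k
          rw [sub_smul, smul_smul]
        rw [Finset.sum_congr rfl (fun k _ => hterm k), Finset.sum_sub_distrib, hlp,
          ← Finset.smul_sum, hq_comb]
      have h2 : ∑ k : Fin (d + 1), (if k = i then c else 0) • q = c • q := by
        have : ∀ k : Fin (d + 1), (if k = i then c else 0) • q
            = if k = i then c • q else 0 := by
          intro k
          split <;> simp
        rw [Finset.sum_congr rfl (fun k _ => this k)]
        simp
      rw [h1, h2]
      abel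
  -- strict minimality
  have hK2 : ∀ q ∈ P.erase p, ∀ j, 0 < B.coord j q → j ≠ g q →
      lam (g q) / B.coord (g q) q < lam j / B.coord j q := by
    intro q hq j hj hne
    have hle := hgmin q j (by simp [hj])
    rcases lt_or_eq_of_le hle with h | h
    · exact h
    exfalso
    set i := g q with hi
    have hipos : 0 < B.coord i q := hgpos q
    have hqv : q ∉ Set.range v := by
      rintro ⟨k, rfl⟩
      have hik : i = k := hK1 k
      have hjk : j = k := by
        by_contra h'
        rw [hcoordv] at hj
        simp [h'] at hj
      exact hne (hjk.trans hik.symm)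
    set c : ℝ := lam i / B.coord i q with hc
    have hci : lam i = c * B.coord i q := by
      rw [hc, div_mul_cancel₀ _ hipos.ne']
    have hcj : lam j = c * B.coord j q := by
      rw [h]
      field_simp
    obtain ⟨hsum1, hsumv⟩ := hOmega q i c hci
    set ω : Fin (d + 1) → ℝ := fun k => (lam k - c * B.coord k q) + if k = i then c else 0
      with hω
    set wq : Fin (d + 1) → EuclideanSpace ℝ (Fin d) := fun k => if k = i then q else v k
      with hwq
    have hωj : ω j = 0 := by
      simp only [hω, if_neg hne]
      rw [hcj]; ring
    have hwqinj : Function.Injective wq := by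
      intro a b hab
      by_contra hne'
      simp only [hwq] at hab
      split_ifs at hab with h1 h2
      · exact hne' (h1.trans h2.symm)
      · exact hqv ⟨b, hab.symm⟩
      · exact hqv ⟨a, hab⟩
      · exact hne' (hvinj hab)
    have hsum1' : ∑ t : Fin d, ω (j.succAbove t) = 1 := by
      have hs := Fin.sum_univ_succAbove ω j
      rw [hsum1, hωj] at hs
      linarith
    have hsumv' : ∑ t : Fin d, ω (j.succAbove t) • wq (j.succAbove t) = p := by
      have hs := Fin.sum_univ_succAbove (fun k => ω k • wq k) j
      rw [hsumv, hωj, zero_smul] at hs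
      have := hs.symm
      simpa using this
    refine hnospan d le_rfl (fun t => wq (j.succAbove t))
      (fun a b hab => Fin.succAbove_right_injective (hwqinj hab)) ?_ ?_
      (mem_span_combo _ _ hsum1' hsumv')
    · intro t
      simp only [hwq]
      split
      · exact Finset.mem_of_mem_erase hq
      · exact hvP _
    · intro t
      simp only [hwq]
      split
      · exact Finset.ne_of_mem_erase hq
      · exact hvnep _
  -- pigeonhole
  have hn1 : 1 ≤ n := hn ▸ Finset.card_pos.mpr ⟨p, hp⟩
  have hfib : ∑ i : Fin (d + 1), ((P.erase p).filter (fun q => g q = i)).card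
      = (P.erase p).card :=
    (Finset.card_eq_sum_card_fiberwise (fun q _ => Finset.mem_univ (g q))).symm
  have hcardP : (P.erase p).card = n - 1 := by rw [Finset.card_erase_of_mem hp, hn]
  obtain ⟨i₀, -, hi₀⟩ : ∃ i ∈ (Finset.univ : Finset (Fin (d + 1))),
      ((n : ℝ) - 1) / (d + 1) ≤ (((P.erase p).filter (fun q => g q = i)).card : ℝ) := by
    apply Finset.exists_le_of_sum_le Finset.univ_nonempty
    have hrhs : ∑ i : Fin (d + 1), (((P.erase p).filter (fun q => g q = i)).card : ℝ)
        = (n : ℝ) - 1 := by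
      rw [← Nat.cast_sum, hfib, hcardP]
      push_cast [hn1]
      ring
    rw [hrhs, Finset.sum_const, Finset.card_univ, Fintype.card_fin, nsmul_eq_mul]
    have hne : ((d : ℝ) + 1) ≠ 0 := by positivity
    push_cast
    rw [mul_div_cancel₀ _ hne]
  set f : Fin d → EuclideanSpace ℝ (Fin d) := fun t => v (i₀.succAbove t) with hf
  have hfinj : Function.Injective f := fun a b hab =>
    Fin.succAbove_right_injective (hvinj hab)
  have hfPE : ∀ t, f t ∈ P.erase p := fun t => hvPE _
  set U : Finset (EuclideanSpace ℝ (Fin d)) := (P.erase p).filter (fun q => g q = i₀) with hU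
  have hUsub : U ⊆ P \ insert p (Finset.image f Finset.univ) := by
    intro q hq
    simp only [hU, Finset.mem_filter] at hq
    obtain ⟨hqe, hgq⟩ := hq
    rw [Finset.mem_sdiff]
    refine ⟨Finset.mem_of_mem_erase hqe, ?_⟩
    simp only [Finset.mem_insert, Finset.mem_image, not_or]
    refine ⟨Finset.ne_of_mem_erase hqe, ?_⟩
    rintro ⟨t, -, rfl⟩
    have := hK1 (i₀.succAbove t)
    rw [hf] at hgq
    rw [hgq] at this
    exact Fin.succAbove_ne i₀ t this.symm
  refine ⟨f, hfinj, hfPE, U, hUsub, hi₀, ?_⟩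
  intro q hq
  have hqsd := hUsub hq
  rw [Finset.mem_sdiff] at hqsd
  obtain ⟨hqP, hqnot⟩ := hqsd
  simp only [Finset.mem_insert, Finset.mem_image, not_or] at hqnot
  obtain ⟨hqnp, hqnf⟩ := hqnot
  simp only [hU, Finset.mem_filter] at hq
  obtain ⟨hqe, hgq⟩ := hq
  -- the simplex with vertices q and f
  have hipos : 0 < B.coord i₀ q := by
    have := hgpos q
    rwa [hgq] at this
  set c : ℝ := lam i₀ / B.coord i₀ q with hc
  have hcpos : 0 < c := div_pos (hlpos i₀) hipos
  have hci : lam i₀ = c * B.coord i₀ q := by rw [hc, div_mul_cancel₀ _ hipos.ne']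
  obtain ⟨hsum1, hsumv⟩ := hOmega q i₀ c hci
  set ω : Fin (d + 1) → ℝ := fun k => (lam k - c * B.coord k q) + if k = i₀ then c else 0
    with hω
  set wq : Fin (d + 1) → EuclideanSpace ℝ (Fin d) := fun k => if k = i₀ then q else v k
    with hwq
  have hqnv : ∀ k, k ≠ i₀ → q ≠ v k := by
    intro k hk hqv
    obtain ⟨t, ht⟩ := Fin.exists_succAbove_eq hk
    exact hqnf ⟨t, Finset.mem_univ t, by simp only [hf]; rw [ht]; exact hqv.symm⟩
  have hωpos : ∀ k, 0 < ω k := by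
    intro k
    by_cases hk : k = i₀
    · subst hk
      simp only [hω, if_pos rfl]
      rw [hci]
      simpa using hcpos
    · simp only [hω, if_neg hk]
      rcases le_or_gt (B.coord k q) 0 with hα | hα
      · have h1 : c * B.coord k q ≤ 0 := mul_nonpos_of_nonneg_of_nonpos hcpos.le hα
        have h2 := hlpos k
        simp only [add_zero]
        linarith
      · have hstrict := hK2 q hqe k hα (by rw [hgq]; exact hk)
        rw [hgq, ← hc] at hstrict
        have h3 : c * B.coord k q < lam k := (lt_div_iff₀ hα).mp hstrict
        simp only [add_zero]
        linarith
  have hwqinj : Function.Injective wq := by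
    intro a b hab
    by_contra hne'
    simp only [hwq] at hab
    split_ifs at hab with h1 h2
    · exact hne' (h1.trans h2.symm)
    · exact hqnv b h2 hab
    · exact hqnv a h1 hab.symm
    · exact hne' (hvinj hab)
  have hwqP : ∀ k, wq k ∈ P := by
    intro k
    simp only [hwq]
    split
    · exact hqP
    · exact hvP _
  have hwqind : AffineIndependent ℝ wq := gen_fam hgen wq hwqinj hwqP le_rfl
  have hwqtot : affineSpan ℝ (Set.range wq) = ⊤ := by
    rw [hwqind.affineSpan_eq_top_iff_card_eq_finrank_add_one]
    simp [finrank_euclideanSpace_fin]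
  let B' : AffineBasis (Fin (d + 1)) ℝ (EuclideanSpace ℝ (Fin d)) := ⟨wq, hwqind, hwqtot⟩
  have hcoords : ∀ k, B'.coord k p = ω k := hcoordgen B' p ω hsum1 hsumv
  have hrange : Set.range wq = insert q (Set.range f) := by
    ext x
    simp only [Set.mem_range, Set.mem_insert_iff]
    constructor
    · rintro ⟨k, rfl⟩
      by_cases hk : k = i₀
      · left; simp [hwq, hk]
      · right
        obtain ⟨t, ht⟩ := Fin.exists_succAbove_eq hk
        exact ⟨t, by simp only [hf]; rw [ht]; simp [hwq, hk]⟩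
    · rintro (rfl | ⟨t, rfl⟩)
      · exact ⟨i₀, by simp [hwq]⟩
      · exact ⟨i₀.succAbove t, by simp [hwq, hf, Fin.succAbove_ne i₀ t]⟩
  have hpint' : p ∈ interior (convexHull ℝ (insert q (Set.range f))) := by
    rw [← hrange]
    have hr : Set.range wq = Set.range (B' : Fin (d + 1) → EuclideanSpace ℝ (Fin d)) := rfl
    rw [hr, B'.interior_convexHull]
    intro k
    rw [hcoords k]
    exact hωpos k
  refine ⟨hpint', ?_⟩
  intro hcvx
  have hpS : p ∈ insert q (insert p (Finset.image f Finset.univ)) := by simp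
  refine hcvx p hpS ?_
  have hpf : p ∉ Finset.image f Finset.univ := by
    simp only [Finset.mem_image]
    push_neg
    intro t _
    exact Finset.ne_of_mem_erase (hfPE t)
  have hpqf : p ∉ insert q (Finset.image f Finset.univ) := by
    simp only [Finset.mem_insert, not_or]
    exact ⟨Ne.symm hqnp, hpf⟩
  have herase : (insert q (insert p (Finset.image f Finset.univ))).erase p
      = insert q (Finset.image f Finset.univ) := by
    rw [Finset.insert_comm, Finset.erase_insert hpqf]
  rw [herase]
  have hcoe : ((insert q (Finset.image f Finset.univ) : Finset (EuclideanSpace ℝ (Fin d))) :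
      Set (EuclideanSpace ℝ (Fin d))) = insert q (Set.range f) := by
    simp
  rw [hcoe]
  exact interior_subset hpint'
end

section
/- Let d ≥ 2, let 0 < ε < 1, and let P ⊂ ℝ^d be a set of n points in general position that is ε-far from convex position. Let k = ⌊εn/(d+1)⌋ and assume k ≥ 1. Then there exist sets W_1, …, W_k ⊆ P and U_1, …, U_k ⊆ P such that: (i) |W_i| = d+1 for all 1 ≤ i ≤ k; (ii) W_i ∩ W_j = ∅ for all 1 ≤ i < j ≤ k; (iii) W_i ∩ U_i = ∅ for all 1 ≤ i ≤ k; (iv) W_i ∪ {q} is not in convex position for every q ∈ U_i and every 1 ≤ i ≤ k; and (v) |U_i| ≥ (1−ε)n/(d+1) for all 1 ≤ i ≤ k. -/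
open scoped Classical

/-- `P` (of size `n`) is `ε`-far from convex position: there is no `X ⊆ P` with
`|X| ≤ εn` such that `P \ X` is in convex position. -/
def EpsFar {d : ℕ} (P : Finset (EuclideanSpace ℝ (Fin d))) (ε : ℝ) : Prop :=
  ¬ ∃ X ⊆ P, (X.card : ℝ) ≤ ε * P.card ∧ InConvexPosition (P \ X)

section Helpers

variable {d : ℕ}

local notation "E" => EuclideanSpace ℝ (Fin d)

lemma small_notin {P T : Finset E} (hgen : InGeneralPosition P) (hT : T ⊆ P) {p : E}
    (hp : p ∈ P) (hpT : p ∉ T) (hc : T.card ≤ d) : p ∉ convexHull ℝ (T : Set E) := by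
  intro hmem
  have hins : AffineIndependent ℝ (fun q : ((insert p T : Finset E) : Set E) => (q : E)) :=
    hgen (insert p T) (Finset.insert_subset hp hT)
      (by rw [Finset.card_insert_of_notMem hpT]; omega)
  have hspan : p ∈ affineSpan ℝ (T : Set E) := convexHull_subset_affineSpan _ hmem
  have hi : p ∈ (insert p T : Finset E) := Finset.mem_insert_self _ _
  have hkey := hins.notMem_affineSpan_diff ⟨p, hi⟩ Set.univ
  apply hkey
  have himg : (fun q : ((insert p T : Finset E) : Set E) => (q : E)) ''
      (Set.univ \ {⟨p, hi⟩}) = (T : Set E) := by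
    ext x
    simp only [Set.mem_image, Set.mem_diff, Set.mem_univ, Set.mem_singleton_iff, true_and]
    constructor
    · rintro ⟨⟨y, hy⟩, hne, rfl⟩
      have : y ≠ p := by
        intro h; apply hne; exact Subtype.ext h
      rcases Finset.mem_insert.1 hy with h | h
      · exact absurd h this
      · exact h
    · intro hx
      refine ⟨⟨x, Finset.mem_insert_of_mem hx⟩, ?_, rfl⟩
      intro h
      apply hpT
      have : x = p := congrArg Subtype.val h
      rwa [this] at hx
  rwa [himg]

lemma cone_cover {S : Finset E} (hA : AffineIndependent ℝ (fun q : (S : Set E) => (q : E)))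
    (hcard : S.card = d + 1) {p : E} (hp : p ∈ convexHull ℝ (S : Set E)) (q : E) :
    ∃ s ∈ S, p ∈ convexHull ℝ ((insert q (S.erase s) : Finset E) : Set E) := by
  by_cases hqS : q ∈ S
  · exact ⟨q, hqS, by rwa [Finset.insert_erase hqS]⟩
  -- barycentric coordinates of q
  have hspan : affineSpan ℝ (S : Set E) = ⊤ := by
    have h := hA.affineSpan_eq_top_iff_card_eq_finrank_add_one (V := E)
    rw [Subtype.range_coe] at h
    rw [h]; simp [hcard, finrank_euclideanSpace_fin]
  have hqspan : q ∈ affineSpan ℝ (S : Set E) := by rw [hspan]; trivial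
  rw [← Subtype.range_coe (s := (S : Set E))] at hqspan
  obtain ⟨w, hw1, hwq⟩ := eq_affineCombination_of_mem_affineSpan_of_fintype hqspan
  set γ : E → ℝ := fun x => if h : x ∈ S then w ⟨x, h⟩ else 0 with hγdef
  have hγ1 : ∑ x ∈ S, γ x = 1 := by
    rw [← hw1, ← Finset.sum_attach S (fun x => γ x)]
    rw [Finset.univ_eq_attach] at *
    apply Finset.sum_congr rfl
    intro x _
    simp [hγdef, x.2]
  have hγq : ∑ x ∈ S, γ x • x = q := by
    have := hwq
    rw [Finset.affineCombination_eq_linear_combination _ _ _ hw1] at this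
    rw [this, ← Finset.sum_attach S (fun x => γ x • x)]
    rw [Finset.univ_eq_attach]
    apply Finset.sum_congr rfl
    intro x _
    simp [hγdef, x.2]
  -- convex coordinates of p
  rw [Finset.convexHull_eq] at hp
  obtain ⟨lam, hlam0, hlam1, hlamp⟩ := hp
  rw [Finset.centerMass_eq_of_sum_1 _ _ hlam1] at hlamp
  simp only [id] at hlamp
  -- pick j minimizing lam/γ among positive γ
  have hTne : (S.filter (fun x => 0 < γ x)).Nonempty := by
    rw [Finset.filter_nonempty_iff]
    by_contra h
    push_neg at h
    have : ∑ x ∈ S, γ x ≤ 0 := Finset.sum_nonpos h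
    linarith
  obtain ⟨j, hjT, hjmin⟩ := Finset.exists_min_image _ (fun x => lam x / γ x) hTne
  have hjS : j ∈ S := (Finset.mem_filter.1 hjT).1
  have hγj : 0 < γ j := (Finset.mem_filter.1 hjT).2
  set t : ℝ := lam j / γ j with htdef
  have ht0 : 0 ≤ t := div_nonneg (hlam0 j hjS) hγj.le
  have htγj : t * γ j = lam j := div_mul_cancel₀ _ hγj.ne'
  have hnn : ∀ x ∈ S.erase j, 0 ≤ lam x - t * γ x := by
    intro x hx
    have hxS : x ∈ S := Finset.mem_of_mem_erase hx
    rcases le_or_gt (γ x) 0 with h | h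
    · nlinarith [hlam0 x hxS]
    · have hxT : x ∈ S.filter (fun x => 0 < γ x) := Finset.mem_filter.2 ⟨hxS, h⟩
      have := hjmin x hxT
      rw [htdef, div_le_div_iff₀ hγj h] at this
      nlinarith
  refine ⟨j, hjS, ?_⟩
  have hqe : q ∉ S.erase j := fun h => hqS (Finset.mem_of_mem_erase h)
  set w' : E → ℝ := fun x => if x = q then t else lam x - t * γ x with hw'def
  rw [Finset.convexHull_eq]
  have hsum_erase : ∀ f : E → ℝ, ∑ x ∈ S.erase j, f x = ∑ x ∈ S, f x - f j :=
    fun f => Finset.sum_erase_eq_sub hjS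
  have hw'sum : ∑ x ∈ insert q (S.erase j), w' x = 1 := by
    rw [Finset.sum_insert hqe]
    have : ∀ x ∈ S.erase j, w' x = lam x - t * γ x := by
      intro x hx
      have : x ≠ q := fun h => hqe (h ▸ hx)
      simp [hw'def, this]
    rw [Finset.sum_congr rfl this, Finset.sum_erase_eq_sub hjS]
    have h1 : ∑ x ∈ S, (lam x - t * γ x) = 1 - t := by
      rw [Finset.sum_sub_distrib, hlam1, ← Finset.mul_sum, hγ1]
      ring
    simp only [hw'def, if_pos rfl]
    rw [h1]
    have : lam j - t * γ j = 0 := by rw [htγj]; ring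
    rw [this]
    ring
  refine ⟨w', ?_, hw'sum, ?_⟩
  · intro y hy
    rcases Finset.mem_insert.1 hy with rfl | hy'
    · simpa [hw'def] using ht0
    · have hyq : y ≠ q := fun h => hqe (h ▸ hy')
      simpa [hw'def, hyq] using hnn y hy'
  · rw [Finset.centerMass_eq_of_sum_1 _ _ hw'sum]
    simp only [id]
    rw [Finset.sum_insert hqe]
    have hcong : ∀ x ∈ S.erase j, w' x • x = (lam x - t * γ x) • x := by
      intro x hx
      have : x ≠ q := fun h => hqe (h ▸ hx)
      simp [hw'def, this]
    rw [Finset.sum_congr rfl hcong, Finset.sum_erase_eq_sub hjS]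
    have h2 : ∑ x ∈ S, (lam x - t * γ x) • x = p - t • q := by
      have : ∀ x ∈ S, (lam x - t * γ x) • x = lam x • x - t • (γ x • x) := by
        intro x _
        rw [sub_smul, smul_smul]
      rw [Finset.sum_congr rfl this, Finset.sum_sub_distrib, hlamp, ← Finset.smul_sum, hγq]
    rw [h2]
    have h3 : (lam j - t * γ j) • j = (0 : ℝ) • j := by rw [htγj]; ring_nf
    rw [h3]
    simp only [hw'def, if_pos rfl, zero_smul, sub_zero]
    module

lemma step_lemma {n : ℕ} {ε : ℝ} (hε0 : 0 < ε) (P : Finset E) (hn : P.card = n)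
    (hgen : InGeneralPosition P) (hfar : EpsFar P ε)
    (X : Finset E) (hXP : X ⊆ P) (hX : (X.card : ℝ) + (d + 1) ≤ ε * n) :
    ∃ W U : Finset E, W ⊆ P \ X ∧ U ⊆ P ∧ W.card = d + 1 ∧ Disjoint W U ∧
      (∀ q ∈ U, ¬ InConvexPosition (insert q W)) ∧ (1 - ε) * n / (d + 1) ≤ (U.card : ℝ) := by
  have hd1 : (0 : ℝ) < d + 1 := by positivity
  -- R = P \ X is not in convex position
  have hXcard : (X.card : ℝ) ≤ ε * P.card := by rw [hn]; linarith
  have hnotconv : ¬ InConvexPosition (P \ X) := fun h => hfar ⟨X, hXP, hXcard, h⟩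
  rw [InConvexPosition] at hnotconv
  push_neg at hnotconv
  obtain ⟨p, hpR, hpc⟩ := hnotconv
  set R : Finset E := P \ X with hRdef
  have hRP : R ⊆ P := Finset.sdiff_subset
  have hpP : p ∈ P := hRP hpR
  -- Caratheodory
  rw [convexHull_eq_union] at hpc
  simp only [Set.mem_iUnion] at hpc
  obtain ⟨t, hts, haff, hpt⟩ := hpc
  have htsub : t ⊆ R.erase p := Finset.coe_subset.1 hts
  have htP : t ⊆ P := htsub.trans ((Finset.erase_subset _ _).trans hRP)
  have hpnt : p ∉ t := fun h => (Finset.ne_of_mem_erase (htsub h)) rfl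
  -- t has exactly d+1 elements
  have htcard : t.card = d + 1 := by
    by_contra hne
    have hle : t.card ≤ d := by
      have : t.card ≤ d + 1 := by
        have h1 := haff.card_le_finrank_succ
        rw [Fintype.card_coe] at h1
        refine h1.trans (Nat.add_le_add_right ?_ 1)
        exact (Submodule.finrank_le _).trans (le_of_eq finrank_euclideanSpace_fin)
      omega
    exact small_notin hgen htP hpP hpnt hle hpt
  -- pigeonhole over the d+1 cones
  set Q : Finset E := R.erase p with hQdef
  set Us : E → Finset E := fun s =>
    Q.filter (fun q => p ∈ convexHull ℝ ((insert q (t.erase s) : Finset E) : Set E)) with hUsdef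
  have hcover : Q ⊆ t.biUnion Us := by
    intro q hq
    obtain ⟨s, hs, hmem⟩ := cone_cover haff htcard hpt q
    exact Finset.mem_biUnion.2 ⟨s, hs, Finset.mem_filter.2 ⟨hq, hmem⟩⟩
  have hQle : Q.card ≤ ∑ s ∈ t, (Us s).card :=
    le_trans (Finset.card_le_card hcover) (Finset.card_biUnion_le)
  have htne : t.Nonempty := Finset.card_pos.1 (by omega)
  obtain ⟨s0, hs0, hmax⟩ := Finset.exists_max_image t (fun s => (Us s).card) htne
  have hQle2 : Q.card ≤ (d + 1) * (Us s0).card := by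
    calc Q.card ≤ ∑ s ∈ t, (Us s).card := hQle
    _ ≤ ∑ _s ∈ t, (Us s0).card := Finset.sum_le_sum (fun s hs => hmax s hs)
    _ = (d + 1) * (Us s0).card := by rw [Finset.sum_const, htcard, smul_eq_mul]
  -- define W and U
  refine ⟨insert p (t.erase s0), Us s0, ?_, ?_, ?_, ?_, ?_, ?_⟩
  · exact Finset.insert_subset hpR (((Finset.erase_subset _ _).trans htsub).trans (Finset.erase_subset _ _))
  · exact (Finset.filter_subset _ _).trans ((Finset.erase_subset _ _).trans hRP)
  · rw [Finset.card_insert_of_notMem (fun h => hpnt (Finset.mem_of_mem_erase h)),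
      Finset.card_erase_of_mem hs0, htcard]
    omega
  · -- disjointness
    rw [Finset.disjoint_left]
    intro x hxW hxU
    have hxQ : x ∈ Q := Finset.mem_of_mem_filter _ hxU
    have hxp : x ≠ p := Finset.ne_of_mem_erase hxQ
    have hxte : x ∈ t.erase s0 := by
      rcases Finset.mem_insert.1 hxW with h | h
      · exact absurd h hxp
      · exact h
    have hmem : p ∈ convexHull ℝ ((insert x (t.erase s0) : Finset E) : Set E) :=
      (Finset.mem_filter.1 hxU).2
    rw [Finset.insert_eq_self.2 hxte] at hmem
    have hsub : t.erase s0 ⊆ P := (Finset.erase_subset _ _).trans htP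
    have hpne : p ∉ t.erase s0 := fun h => hpnt (Finset.mem_of_mem_erase h)
    have hcard' : (t.erase s0).card ≤ d := by
      rw [Finset.card_erase_of_mem hs0, htcard]; omega
    exact small_notin hgen hsub hpP hpne hcard' hmem
  · -- witness property
    intro q hqU hconv
    have hqQ : q ∈ Q := Finset.mem_of_mem_filter _ hqU
    have hqp : q ≠ p := Finset.ne_of_mem_erase hqQ
    have hmem : p ∈ convexHull ℝ ((insert q (t.erase s0) : Finset E) : Set E) :=
      (Finset.mem_filter.1 hqU).2
    have hpin : p ∈ insert q (insert p (t.erase s0)) :=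
      Finset.mem_insert_of_mem (Finset.mem_insert_self _ _)
    apply hconv p hpin
    apply convexHull_mono _ hmem
    intro x hx
    simp only [Finset.coe_insert, Set.mem_insert_iff, Finset.mem_coe] at hx ⊢
    rw [Finset.mem_erase]
    rcases hx with rfl | hx
    · exact ⟨hqp, Finset.mem_insert_self _ _⟩
    · refine ⟨fun h => (Finset.ne_of_mem_erase hx) ?_, Finset.mem_insert_of_mem (Finset.mem_insert_of_mem hx)⟩
      · exfalso; exact hpnt (Finset.mem_of_mem_erase (h ▸ hx))
  · -- size of U
    have hXP' : X.card ≤ P.card := Finset.card_le_card hXP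
    have hRcard : (R.card : ℝ) = n - X.card := by
      rw [hRdef, Finset.card_sdiff_of_subset hXP, Nat.cast_sub hXP', hn]
    have hpR' : 1 ≤ R.card := Finset.card_pos.2 ⟨p, hpR⟩
    have hQcard : (Q.card : ℝ) = n - X.card - 1 := by
      rw [hQdef, Finset.card_erase_of_mem hpR, Nat.cast_sub hpR', hRcard]
      push_cast
      ring
    have h1 : (1 - ε) * n ≤ (Q.card : ℝ) := by
      rw [hQcard]
      have hd0 : (0:ℝ) ≤ d := Nat.cast_nonneg d
      nlinarith
    have h2 : (Q.card : ℝ) ≤ (d + 1) * (Us s0).card := by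
      have := hQle2
      calc (Q.card : ℝ) ≤ ((d + 1) * (Us s0).card : ℕ) := Nat.cast_le.2 hQle2
      _ = (d + 1) * (Us s0).card := by push_cast; ring
    rw [div_le_iff₀ hd1]
    nlinarith

lemma build_lemma {n : ℕ} {ε : ℝ} (hε0 : 0 < ε) (P : Finset E) (hn : P.card = n)
    (hgen : InGeneralPosition P) (hfar : EpsFar P ε)
    (k : ℕ) (hkle : ((d : ℝ) + 1) * k ≤ ε * n) :
    ∀ m, m ≤ k → ∃ W U : Fin m → Finset E,
      (∀ i, W i ⊆ P) ∧ (∀ i, U i ⊆ P) ∧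
      (∀ i, (W i).card = d + 1) ∧
      (∀ i j, i ≠ j → Disjoint (W i) (W j)) ∧
      (∀ i, Disjoint (W i) (U i)) ∧
      (∀ i, ∀ q ∈ U i, ¬ InConvexPosition (insert q (W i))) ∧
      (∀ i, (1 - ε) * n / (d + 1) ≤ ((U i).card : ℝ)) := by
  intro m
  induction m with
  | zero =>
    intro _
    refine ⟨fun i => i.elim0, fun i => i.elim0, ?_, ?_, ?_, ?_, ?_, ?_, ?_⟩ <;>
      exact fun i => i.elim0
  | succ m ih =>
    intro hm
    obtain ⟨W, U, hWP, hUP, hWc, hWd, hWU, hwit, hUc⟩ := ih (Nat.le_of_succ_le hm)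
    set X : Finset E := Finset.univ.biUnion W with hXdef
    have hXP : X ⊆ P := Finset.biUnion_subset.2 (fun i _ => hWP i)
    have hXc : X.card ≤ m * (d + 1) := by
      calc X.card ≤ ∑ i : Fin m, (W i).card := Finset.card_biUnion_le
      _ = ∑ _i : Fin m, (d + 1) := by exact Finset.sum_congr rfl (fun i _ => hWc i)
      _ = m * (d + 1) := by simp [Finset.sum_const, Finset.card_univ]
    have hsubX : ∀ j : Fin m, W j ⊆ X :=
      fun j => Finset.subset_biUnion_of_mem W (Finset.mem_univ j)
    have hXreal : (X.card : ℝ) + (d + 1) ≤ ε * n := by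
      have h1 : (X.card : ℝ) ≤ m * (d + 1) := by
        calc (X.card : ℝ) ≤ ((m * (d + 1) : ℕ) : ℝ) := Nat.cast_le.2 hXc
        _ = m * (d + 1) := by push_cast; ring
      have h2 : ((m : ℝ) + 1) ≤ k := by
        have h3 := (Nat.cast_le (α := ℝ)).2 hm
        push_cast at h3
        linarith
      have hd0 : (0 : ℝ) ≤ d + 1 := by positivity
      nlinarith
    obtain ⟨W', U', hW'sub, hU'P, hW'c, hW'U', hwit', hU'c⟩ :=
      step_lemma hε0 P hn hgen hfar X hXP hXreal
    have hW'X : Disjoint W' X := by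
      rw [Finset.disjoint_left]
      intro x hx hxX
      exact (Finset.mem_sdiff.1 (hW'sub hx)).2 hxX
    refine ⟨Fin.snoc W W', Fin.snoc U U', ?_, ?_, ?_, ?_, ?_, ?_, ?_⟩
    · intro i
      induction i using Fin.lastCases with
      | last => rw [Fin.snoc_last]; exact hW'sub.trans Finset.sdiff_subset
      | cast j => rw [Fin.snoc_castSucc]; exact hWP j
    · intro i
      induction i using Fin.lastCases with
      | last => rw [Fin.snoc_last]; exact hU'P
      | cast j => rw [Fin.snoc_castSucc]; exact hUP j
    · intro i
      induction i using Fin.lastCases with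
      | last => rw [Fin.snoc_last]; exact hW'c
      | cast j => rw [Fin.snoc_castSucc]; exact hWc j
    · intro i j
      induction i using Fin.lastCases with
      | last =>
        induction j using Fin.lastCases with
        | last => intro hij; exact absurd rfl hij
        | cast j' =>
          intro _
          rw [Fin.snoc_last, Fin.snoc_castSucc]
          exact hW'X.mono_right (hsubX j')
      | cast i' =>
        induction j using Fin.lastCases with
        | last =>
          intro _
          rw [Fin.snoc_last, Fin.snoc_castSucc]
          exact (hW'X.mono_right (hsubX i')).symm
        | cast j' =>
          intro hij
          rw [Fin.snoc_castSucc, Fin.snoc_castSucc]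
          exact hWd i' j' (fun h => hij (by rw [h]))
    · intro i
      induction i using Fin.lastCases with
      | last => rw [Fin.snoc_last, Fin.snoc_last]; exact hW'U'
      | cast j => rw [Fin.snoc_castSucc, Fin.snoc_castSucc]; exact hWU j
    · intro i
      induction i using Fin.lastCases with
      | last => rw [Fin.snoc_last, Fin.snoc_last]; exact hwit'
      | cast j => rw [Fin.snoc_castSucc, Fin.snoc_castSucc]; exact hwit j
    · intro i
      induction i using Fin.lastCases with
      | last => rw [Fin.snoc_last]; exact hU'c
      | cast j => rw [Fin.snoc_castSucc]; exact hUc j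

end Helpers

theorem stmt4 {d n : ℕ} (hd : 2 ≤ d) (ε : ℝ) (hε0 : 0 < ε) (hε1 : ε < 1)
    (P : Finset (EuclideanSpace ℝ (Fin d))) (hn : P.card = n)
    (hgen : InGeneralPosition P) (hfar : EpsFar P ε)
    (k : ℕ) (hk : k = ⌊ε * n / (d + 1)⌋₊) (hk1 : 1 ≤ k) :
    ∃ W U : Fin k → Finset (EuclideanSpace ℝ (Fin d)),
      (∀ i, W i ⊆ P) ∧ (∀ i, U i ⊆ P) ∧
      (∀ i, (W i).card = d + 1) ∧
      (∀ i j, i ≠ j → Disjoint (W i) (W j)) ∧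
      (∀ i, Disjoint (W i) (U i)) ∧
      (∀ i, ∀ q ∈ U i, ¬ InConvexPosition (insert q (W i))) ∧
      (∀ i, (1 - ε) * n / (d + 1) ≤ ((U i).card : ℝ)) := by
  have hd1 : (0 : ℝ) < (d : ℝ) + 1 := by positivity
  have hkle : ((d : ℝ) + 1) * k ≤ ε * n := by
    have h1 : (k : ℝ) ≤ ε * n / (d + 1) := by
      rw [hk]
      exact Nat.floor_le (by positivity)
    rw [le_div_iff₀ hd1] at h1
    linarith
  exact build_lemma hε0 P hn hgen hfar k hkle k le_rfl
end

section
/- Let Ω be a finite set of size n with n ≥ 2^10, and let W_1, W_2, …, W_k ⊆ Ω be k pairwise disjoint subsets of Ω, each of size ℓ, where k ≥ 10 and 3 ≤ ℓ ≤ n/32. Let s be a positive integer with ℓ + (n−ℓ)/(2k)^{1/ℓ} ≤ s ≤ n. Then the number of s-element subsets S ⊆ Ω such that W_i ⊆ S for at least one i ∈ {1, …, k} is at least (1/4)·C(n,s). Equivalently, a uniformly random s-element subset S ⊆ Ω contains some W_i with probability at least 1/4. -/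
set_option maxHeartbeats 1000000

open scoped Classical

lemma count_superset {α : Type*} (Ω V : Finset α) (hV : V ⊆ Ω) (s : ℕ) (hs : V.card ≤ s) :
    ((Ω.powersetCard s).filter (fun S => V ⊆ S)).card = (Ω.card - V.card).choose (s - V.card) := by
  classical
  have h1 : ((Ω \ V).powersetCard (s - V.card)).card = (Ω.card - V.card).choose (s - V.card) := by
    rw [Finset.card_powersetCard, Finset.card_sdiff_of_subset hV]
  rw [← h1]
  apply Finset.card_bij' (fun S _ => S \ V) (fun T _ => T ∪ V)
  · intro S hS
    simp only [Finset.mem_filter, Finset.mem_powersetCard] at hS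
    obtain ⟨⟨hSΩ, hScard⟩, hVS⟩ := hS
    simp only [Finset.mem_powersetCard]
    exact ⟨Finset.sdiff_subset_sdiff hSΩ le_rfl, by rw [Finset.card_sdiff_of_subset hVS, hScard]⟩
  · intro T hT
    simp only [Finset.mem_powersetCard] at hT
    obtain ⟨hTΩ, hTcard⟩ := hT
    have hdisj : Disjoint T V := Finset.disjoint_of_subset_left hTΩ (Finset.sdiff_disjoint)
    simp only [Finset.mem_filter, Finset.mem_powersetCard]
    refine ⟨⟨?_, ?_⟩, Finset.subset_union_right⟩
    · exact Finset.union_subset (hTΩ.trans (Finset.sdiff_subset)) hV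
    · rw [Finset.card_union_of_disjoint hdisj, hTcard]; omega
  · intro S hS
    simp only [Finset.mem_filter, Finset.mem_powersetCard] at hS
    exact Finset.sdiff_union_of_subset hS.2
  · intro T hT
    simp only [Finset.mem_powersetCard] at hT
    have hdisj : Disjoint T V := Finset.disjoint_of_subset_left hT.1 (Finset.sdiff_disjoint)
    exact Finset.union_sdiff_cancel_right hdisj

lemma bonferroni {β : Type*} [DecidableEq β] (A : ℕ → Finset β) (m : ℕ) :
    (∑ i ∈ Finset.range m, ((A i).card : ℝ)) -
      ∑ i ∈ Finset.range m, ∑ j ∈ Finset.range i, ((A i ∩ A j).card : ℝ) ≤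
      (((Finset.range m).biUnion A).card : ℝ) := by
  classical
  induction m with
  | zero => simp
  | succ m ih =>
    rw [Finset.sum_range_succ, Finset.sum_range_succ, Finset.range_add_one, Finset.biUnion_insert]
    have hcard : ((A m ∪ (Finset.range m).biUnion A).card : ℕ) +
        (A m ∩ (Finset.range m).biUnion A).card =
        (A m).card + ((Finset.range m).biUnion A).card :=
      Finset.card_union_add_card_inter _ _
    have hint : ((A m ∩ (Finset.range m).biUnion A).card : ℝ) ≤
        ∑ j ∈ Finset.range m, ((A m ∩ A j).card : ℝ) := by
      have heq : A m ∩ (Finset.range m).biUnion A =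
          (Finset.range m).biUnion (fun j => A m ∩ A j) := by
        ext x; simp [Finset.mem_biUnion]; tauto
      rw [heq]
      exact_mod_cast Nat.cast_le.mpr (Finset.card_biUnion_le)
    have hcard' : ((A m ∪ (Finset.range m).biUnion A).card : ℝ) +
        ((A m ∩ (Finset.range m).biUnion A).card : ℝ) =
        ((A m).card : ℝ) + (((Finset.range m).biUnion A).card : ℝ) := by exact_mod_cast hcard
    linarith

lemma cast_descF (x t : ℕ) (h : t ≤ x) :
    (x.descFactorial t : ℝ) = ∏ i ∈ Finset.range t, ((x : ℝ) - i) := by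
  rw [Nat.descFactorial_eq_prod_range]
  push_cast
  refine Finset.prod_congr rfl fun i hi => ?_
  rw [Finset.mem_range] at hi
  rw [Nat.cast_sub (by omega)]

lemma descF_ratio (n s ℓ : ℕ) (h2 : 2 * ℓ ≤ s) (hsn : s ≤ n) :
    (s.descFactorial (2 * ℓ) : ℝ) * (n.descFactorial ℓ) ^ 2 ≤
      (s.descFactorial ℓ : ℝ) ^ 2 * (n.descFactorial (2 * ℓ)) := by
  have hl : ℓ ≤ s := by omega
  rw [cast_descF s (2*ℓ) h2, cast_descF n (2*ℓ) (h2.trans hsn), cast_descF s ℓ hl,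
    cast_descF n ℓ (hl.trans hsn)]
  rw [two_mul, Finset.prod_range_add, Finset.prod_range_add]
  set Sa := ∏ i ∈ Finset.range ℓ, ((s:ℝ) - i) with hSa
  set Na := ∏ i ∈ Finset.range ℓ, ((n:ℝ) - i) with hNa
  have hSb : ∏ i ∈ Finset.range ℓ, ((s:ℝ) - (ℓ + i : ℕ)) =
      ∏ i ∈ Finset.range ℓ, ((s:ℝ) - ℓ - i) :=
    Finset.prod_congr rfl fun i _ => by push_cast; ring
  have hNb : ∏ i ∈ Finset.range ℓ, ((n:ℝ) - (ℓ + i : ℕ)) =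
      ∏ i ∈ Finset.range ℓ, ((n:ℝ) - ℓ - i) :=
    Finset.prod_congr rfl fun i _ => by push_cast; ring
  rw [hSb, hNb]
  set Sb := ∏ i ∈ Finset.range ℓ, ((s:ℝ) - ℓ - i)
  set Nb := ∏ i ∈ Finset.range ℓ, ((n:ℝ) - ℓ - i)
  have hkey : Sb * Na ≤ Sa * Nb := by
    rw [← Finset.prod_mul_distrib, ← Finset.prod_mul_distrib]
    refine Finset.prod_le_prod (fun i hi => ?_) (fun i hi => ?_)
    · rw [Finset.mem_range] at hi
      have h1 : (ℓ:ℝ) + i ≤ s := by exact_mod_cast Nat.cast_le.mpr (by omega : ℓ + i ≤ s)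
      have h2' : (i:ℝ) ≤ n := by exact_mod_cast Nat.cast_le.mpr (by omega : i ≤ n)
      nlinarith
    · rw [Finset.mem_range] at hi
      have h1 : (ℓ:ℝ) + i ≤ s := by exact_mod_cast Nat.cast_le.mpr (by omega : ℓ + i ≤ s)
      have h3 : (s:ℝ) ≤ n := by exact_mod_cast hsn
      nlinarith
  have hSa0 : 0 ≤ Sa := Finset.prod_nonneg fun i hi => by
    rw [Finset.mem_range] at hi
    have : (i:ℝ) ≤ s := by exact_mod_cast Nat.cast_le.mpr (by omega : i ≤ s)
    linarith
  have hNa0 : 0 ≤ Na := Finset.prod_nonneg fun i hi => by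
    rw [Finset.mem_range] at hi
    have : (i:ℝ) ≤ n := by exact_mod_cast Nat.cast_le.mpr (by omega : i ≤ n)
    linarith
  nlinarith [mul_le_mul_of_nonneg_left hkey (mul_nonneg hSa0 hNa0)]

lemma descF_lb (n s ℓ k : ℕ) (hl0 : 0 < ℓ) (hls : ℓ < s) (hsn : s ≤ n) (hk : 0 < k)
    (hslb : (ℓ : ℝ) + ((n : ℝ) - ℓ) / ((2 * k : ℝ) ^ ((1 : ℝ) / ℓ)) ≤ (s : ℝ)) :
    (n.descFactorial ℓ : ℝ) ≤ 2 * k * s.descFactorial ℓ := by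
  have hsl : (0:ℝ) < (s:ℝ) - ℓ := by
    have : (ℓ:ℝ) < s := by exact_mod_cast hls
    linarith
  have hc0 : (0:ℝ) < (2 * k : ℝ) ^ ((1 : ℝ) / ℓ) := by positivity
  have hnl : (0:ℝ) ≤ (n:ℝ) - ℓ := by
    have : (ℓ:ℝ) ≤ n := by exact_mod_cast (hls.le.trans hsn)
    linarith
  set c := (2 * k : ℝ) ^ ((1 : ℝ) / ℓ) with hc
  set r := ((n:ℝ) - ℓ) / ((s:ℝ) - ℓ) with hr
  have hr0 : 0 ≤ r := div_nonneg hnl hsl.le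
  have hrc : r ≤ c := by
    rw [hr, div_le_iff₀ hsl]
    have h1 : ((n:ℝ) - ℓ) / c ≤ (s:ℝ) - ℓ := by linarith
    calc (n:ℝ) - ℓ = ((n:ℝ) - ℓ) / c * c := by field_simp
    _ ≤ ((s:ℝ) - ℓ) * c := mul_le_mul_of_nonneg_right h1 hc0.le
    _ = c * ((s:ℝ) - ℓ) := by ring
  have hcl : c ^ ℓ = 2 * k := by
    rw [hc, ← Real.rpow_natCast ((2 * k : ℝ) ^ ((1 : ℝ) / ℓ)) ℓ, ← Real.rpow_mul (by positivity),
      one_div, inv_mul_cancel₀ (by exact_mod_cast hl0.ne'), Real.rpow_one]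
  rw [cast_descF n ℓ (hls.le.trans hsn), cast_descF s ℓ hls.le]
  calc ∏ i ∈ Finset.range ℓ, ((n:ℝ) - i)
      ≤ ∏ i ∈ Finset.range ℓ, (r * ((s:ℝ) - i)) := by
        refine Finset.prod_le_prod (fun i hi => ?_) (fun i hi => ?_)
        · rw [Finset.mem_range] at hi
          have : (i:ℝ) ≤ n := by exact_mod_cast Nat.cast_le.mpr (by omega : i ≤ n)
          linarith
        · rw [Finset.mem_range] at hi
          rw [hr, div_mul_eq_mul_div, le_div_iff₀ hsl]
          have hil : (i:ℝ) ≤ ℓ := by exact_mod_cast Nat.cast_le.mpr hi.le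
          have hsn' : (s:ℝ) ≤ n := by exact_mod_cast hsn
          nlinarith [mul_nonneg (sub_nonneg.mpr hil) (sub_nonneg.mpr hsn')]
    _ = r ^ ℓ * ∏ i ∈ Finset.range ℓ, ((s:ℝ) - i) := by
        rw [Finset.prod_mul_distrib, Finset.prod_const, Finset.card_range]
    _ ≤ (2 * k) * ∏ i ∈ Finset.range ℓ, ((s:ℝ) - i) := by
        have hp : r ^ ℓ ≤ c ^ ℓ := pow_le_pow_left₀ hr0 hrc ℓ
        have hprod0 : 0 ≤ ∏ i ∈ Finset.range ℓ, ((s:ℝ) - i) :=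
          Finset.prod_nonneg fun i hi => by
            rw [Finset.mem_range] at hi
            have : (i:ℝ) ≤ s := by exact_mod_cast Nat.cast_le.mpr (by omega : i ≤ s)
            linarith
        rw [hcl] at hp
        exact mul_le_mul_of_nonneg_right hp hprod0

lemma quad_bound (N x : ℝ) (hN0 : 0 ≤ N) (h1 : 1/2 ≤ x) (h2 : x ≤ 3/2) :
    (1/4 : ℝ) * N ≤ N * x - x ^ 2 / 2 * N := by
  nlinarith [mul_nonneg hN0 (mul_nonneg (by linarith : (0:ℝ) ≤ x - 1/2)
    (by linarith : (0:ℝ) ≤ 3/2 - x))]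

theorem stmt5 {α : Type*} (Ω : Finset α) (n k ℓ s : ℕ)
    (hn : Ω.card = n) (hn10 : 2 ^ 10 ≤ n)
    (W : Fin k → Finset α) (hWsub : ∀ i, W i ⊆ Ω)
    (hWdisj : ∀ i j, i ≠ j → Disjoint (W i) (W j))
    (hWcard : ∀ i, (W i).card = ℓ)
    (hk : 10 ≤ k) (hℓ3 : 3 ≤ ℓ) (hℓn : (ℓ : ℝ) ≤ (n : ℝ) / 32)
    (hs0 : 0 < s)
    (hslb : (ℓ : ℝ) + ((n : ℝ) - ℓ) / ((2 * k : ℝ) ^ ((1 : ℝ) / ℓ)) ≤ (s : ℝ))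
    (hsub : s ≤ n) :
    (1 / 4 : ℝ) * (n.choose s : ℝ) ≤
      (((Ω.powersetCard s).filter (fun S => ∃ i, W i ⊆ S)).card : ℝ) := by
  -- basic numeric facts
  have hln : 32 * ℓ ≤ n := by
    have h : (32:ℝ) * ℓ ≤ n := by linarith
    exact_mod_cast h
  have hl0 : 0 < ℓ := by omega
  have hk0 : 0 < k := by omega
  have hln' : ℓ < n := by omega
  have h2ln : 2 * ℓ ≤ n := by omega
  have hls : ℓ < s := by
    have hc0 : (0:ℝ) < (2 * k : ℝ) ^ ((1 : ℝ) / ℓ) := by positivity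
    have hnl : (0:ℝ) < (n:ℝ) - ℓ := by
      have : (ℓ:ℝ) < n := by exact_mod_cast hln'
      linarith
    have : (ℓ:ℝ) < s := by
      have hpos : 0 < ((n:ℝ) - ℓ) / ((2 * k : ℝ) ^ ((1 : ℝ) / ℓ)) := div_pos hnl hc0
      linarith
    exact_mod_cast this
  -- choose values
  set N := n.choose s with hN
  set A := n.choose ℓ with hA
  set B := s.choose ℓ with hB
  set A2 := n.choose (2*ℓ) with hA2
  set B2 := s.choose (2*ℓ) with hB2
  have hA' : (0:ℝ) < A := by exact_mod_cast Nat.choose_pos hln'.le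
  have hB' : (0:ℝ) < B := by exact_mod_cast Nat.choose_pos hls.le
  have hA2' : (0:ℝ) < A2 := by exact_mod_cast Nat.choose_pos h2ln
  have hN0 : (0:ℝ) ≤ N := by positivity
  have hfact : (0:ℝ) < (Nat.factorial ℓ : ℝ) := by positivity
  -- A ≤ 2kB
  have hAB : (A:ℝ) ≤ 2 * k * B := by
    have h := descF_lb n s ℓ k hl0 hls hsub hk0 hslb
    rw [Nat.descFactorial_eq_factorial_mul_choose, Nat.descFactorial_eq_factorial_mul_choose] at h
    push_cast at h
    have h2 : (Nat.factorial ℓ : ℝ) * A ≤ (Nat.factorial ℓ : ℝ) * (2 * k * B) := by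
      rw [← hB] at h
      nlinarith
    exact le_of_mul_le_mul_left h2 hfact
  -- B ≤ A
  have hBA : (B:ℝ) ≤ A := by
    exact_mod_cast Nat.choose_le_choose ℓ hsub
  set p := (B:ℝ) / A with hp
  have hp0 : 0 < p := div_pos hB' hA'
  have hp1 : p ≤ 1 := (div_le_one hA').mpr hBA
  have hkp : (1:ℝ)/2 ≤ (k:ℝ) * p := by
    rw [hp, mul_div_assoc', le_div_iff₀ hA']
    nlinarith
  -- minimal m
  have hex : ∃ m : ℕ, (1:ℝ)/2 ≤ (m:ℝ) * p := ⟨k, hkp⟩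
  obtain ⟨m, hmspec, hmin⟩ :
      ∃ m : ℕ, ((1:ℝ)/2 ≤ (m:ℝ) * p) ∧ ∀ j, j < m → ¬((1:ℝ)/2 ≤ (j:ℝ) * p) :=
    ⟨Nat.find hex, Nat.find_spec hex, fun j hj => Nat.find_min hex hj⟩
  have hmk : m ≤ k := by
    by_contra hc
    exact hmin k (by omega) hkp
  have hm0 : 0 < m :=
    Nat.pos_of_ne_zero (fun h => by rw [h] at hmspec; norm_num at hmspec)
  have hub : (m:ℝ) * p < 3/2 := by
    have hmin' := hmin (m-1) (by omega)
    push_neg at hmin'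
    have hcast : ((m - 1 : ℕ) : ℝ) = (m:ℝ) - 1 := by
      rw [Nat.cast_sub hm0]; norm_num
    rw [hcast] at hmin'
    nlinarith
  -- the events
  set G : ℕ → Finset α := fun i => if h : i < k then W ⟨i, h⟩ else ∅ with hG
  set 𝒜 : ℕ → Finset (Finset α) :=
    fun i => (Ω.powersetCard s).filter (fun S => G i ⊆ S) with h𝒜
  have hGdef : ∀ i (h : i < k), G i = W ⟨i, h⟩ := fun i h => by simp [hG, h]
  have hGsub : ∀ i, i < k → G i ⊆ Ω := fun i h => by rw [hGdef i h]; exact hWsub _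
  have hGcard : ∀ i, i < k → (G i).card = ℓ := fun i h => by rw [hGdef i h]; exact hWcard _
  set F := (Ω.powersetCard s).filter (fun S => ∃ i, W i ⊆ S) with hF
  have hsubF : ∀ i, i < k → 𝒜 i ⊆ F := by
    intro i hik S hS
    simp only [h𝒜, Finset.mem_filter] at hS
    simp only [hF, Finset.mem_filter]
    exact ⟨hS.1, ⟨⟨i, hik⟩, by rw [← hGdef i hik]; exact hS.2⟩⟩
  set c1 := (n - ℓ).choose (s - ℓ) with hc1
  have hcard1 : ∀ i, i < k → (𝒜 i).card = c1 := by
    intro i hik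
    rw [h𝒜]
    have := count_superset Ω (G i) (hGsub i hik) s (by rw [hGcard i hik]; exact hls.le)
    rw [this, hn, hGcard i hik]
  -- identity N*B = A*c1
  have hid1 : N * B = A * c1 := Nat.choose_mul (n := n) hls.le
  have hc1R : (c1:ℝ) = N * p := by
    have : (N:ℝ) * B = A * c1 := by exact_mod_cast hid1
    rw [hp]; field_simp; linarith
  -- pair bound
  have hpair : ∀ i j, i < k → j < k → i ≠ j → ((𝒜 i ∩ 𝒜 j).card : ℝ) ≤ N * p ^ 2 := by
    intro i j hik hjk hij
    have heq : 𝒜 i ∩ 𝒜 j = (Ω.powersetCard s).filter (fun S => G i ∪ G j ⊆ S) := by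
      ext S
      simp only [h𝒜, Finset.mem_inter, Finset.mem_filter, Finset.union_subset_iff]
      tauto
    have hd : Disjoint (G i) (G j) := by
      rw [hGdef i hik, hGdef j hjk]
      exact hWdisj _ _ (by simp [Fin.ext_iff]; omega)
    have hcU : (G i ∪ G j).card = 2 * ℓ := by
      rw [Finset.card_union_of_disjoint hd, hGcard i hik, hGcard j hjk]; ring
    by_cases h2s : 2 * ℓ ≤ s
    · have hcount : (𝒜 i ∩ 𝒜 j).card = (n - 2*ℓ).choose (s - 2*ℓ) := by
        rw [heq]
        have := count_superset Ω (G i ∪ G j)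
          (Finset.union_subset (hGsub i hik) (hGsub j hjk)) s (by rw [hcU]; exact h2s)
        rw [this, hn, hcU]
      rw [hcount]
      set c2 := (n - 2*ℓ).choose (s - 2*ℓ) with hc2
      have hid2 : N * B2 = A2 * c2 := Nat.choose_mul (n := n) h2s
      have hid2R : (N:ℝ) * B2 = A2 * c2 := by exact_mod_cast hid2
      -- B2 * A^2 ≤ B^2 * A2
      have hratio : (B2:ℝ) * A ^ 2 ≤ (B:ℝ) ^ 2 * A2 := by
        have h := descF_ratio n s ℓ h2s hsub
        rw [Nat.descFactorial_eq_factorial_mul_choose s (2*ℓ),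
          Nat.descFactorial_eq_factorial_mul_choose n (2*ℓ),
          Nat.descFactorial_eq_factorial_mul_choose s ℓ,
          Nat.descFactorial_eq_factorial_mul_choose n ℓ] at h
        push_cast at h
        rw [← hA, ← hB, ← hA2, ← hB2] at h
        have hf2 : (0:ℝ) < (Nat.factorial (2*ℓ) : ℝ) * (Nat.factorial ℓ : ℝ) ^ 2 := by
          positivity
        have h2 : ((Nat.factorial (2*ℓ) : ℝ) * (Nat.factorial ℓ : ℝ) ^ 2) * ((B2:ℝ) * A ^ 2) ≤
            ((Nat.factorial (2*ℓ) : ℝ) * (Nat.factorial ℓ : ℝ) ^ 2) * ((B:ℝ) ^ 2 * A2) := by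
          nlinarith
        exact le_of_mul_le_mul_left h2 hf2
      have step1 : (c2:ℝ) * A2 * A ^ 2 ≤ (N:ℝ) * B ^ 2 * A2 := by
        have h3 : (N:ℝ) * (B2 * A ^ 2) ≤ (N:ℝ) * (B ^ 2 * A2) :=
          mul_le_mul_of_nonneg_left hratio hN0
        nlinarith
      have step2 : (c2:ℝ) * A ^ 2 ≤ (N:ℝ) * B ^ 2 :=
        le_of_mul_le_mul_right (by nlinarith) hA2'
      rw [hp, show (N:ℝ) * ((B:ℝ)/A) ^ 2 = N * B ^ 2 / A ^ 2 by ring,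
        le_div_iff₀ (by positivity)]
      linarith
    · have hcount : (𝒜 i ∩ 𝒜 j).card = 0 := by
        rw [heq, Finset.card_eq_zero, Finset.filter_eq_empty_iff]
        intro S hS hGS
        rw [Finset.mem_powersetCard] at hS
        have := Finset.card_le_card hGS
        rw [hcU, hS.2] at this
        omega
      rw [hcount]
      push_cast
      positivity
  clear_value N A B A2 B2 p G 𝒜 F c1
  -- apply bonferroni
  have hbon := bonferroni 𝒜 m
  have hUF : (Finset.range m).biUnion 𝒜 ⊆ F :=
    Finset.biUnion_subset.mpr fun i hi =>
      hsubF i (lt_of_lt_of_le (Finset.mem_range.mp hi) hmk)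
  have hUFcard : (((Finset.range m).biUnion 𝒜).card : ℝ) ≤ (F.card : ℝ) := by
    exact_mod_cast Finset.card_le_card hUF
  have hsum1 : (∑ i ∈ Finset.range m, ((𝒜 i).card : ℝ)) = m * c1 := by
    rw [Finset.sum_congr rfl fun i hi => by
      rw [hcard1 i (lt_of_lt_of_le (Finset.mem_range.mp hi) hmk)]]
    rw [Finset.sum_const, Finset.card_range, nsmul_eq_mul]
  have hsum2 : ∑ i ∈ Finset.range m, ∑ j ∈ Finset.range i, ((𝒜 i ∩ 𝒜 j).card : ℝ) ≤
      ((m:ℝ) * ((m:ℝ) - 1) / 2) * ((N:ℝ) * p ^ 2) := by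
    have hstep : ∑ i ∈ Finset.range m, ∑ j ∈ Finset.range i, ((𝒜 i ∩ 𝒜 j).card : ℝ) ≤
        ∑ i ∈ Finset.range m, (i : ℝ) * ((N:ℝ) * p ^ 2) := by
      refine Finset.sum_le_sum fun i hi => ?_
      have hik : i < k := lt_of_lt_of_le (Finset.mem_range.mp hi) hmk
      calc ∑ j ∈ Finset.range i, ((𝒜 i ∩ 𝒜 j).card : ℝ)
          ≤ ∑ j ∈ Finset.range i, ((N:ℝ) * p ^ 2) := by
            refine Finset.sum_le_sum fun j hj => ?_
            have hji : j < i := Finset.mem_range.mp hj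
            exact hpair i j hik (by omega) (by omega)
        _ = (i : ℝ) * ((N:ℝ) * p ^ 2) := by
            rw [Finset.sum_const, Finset.card_range, nsmul_eq_mul]
    have hgauss : (∑ i ∈ Finset.range m, (i:ℝ)) = (m:ℝ) * ((m:ℝ) - 1) / 2 := by
      have h : (∑ i ∈ Finset.range m, i) * 2 = m * (m - 1) := Finset.sum_range_id_mul_two m
      have h2 := congrArg (Nat.cast (R := ℝ)) h
      push_cast [Nat.cast_sub hm0] at h2
      linarith
    calc ∑ i ∈ Finset.range m, ∑ j ∈ Finset.range i, ((𝒜 i ∩ 𝒜 j).card : ℝ)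
        ≤ ∑ i ∈ Finset.range m, (i : ℝ) * ((N:ℝ) * p ^ 2) := hstep
      _ = ((m:ℝ) * ((m:ℝ) - 1) / 2) * ((N:ℝ) * p ^ 2) := by
          rw [← Finset.sum_mul, hgauss]
  -- final numeric assembly
  set x := (m:ℝ) * p with hx
  have hm0' : (0:ℝ) ≤ m := Nat.cast_nonneg m
  have hsum2' : ∑ i ∈ Finset.range m, ∑ j ∈ Finset.range i, ((𝒜 i ∩ 𝒜 j).card : ℝ) ≤
      x ^ 2 / 2 * N := by
    have h1 : ((m:ℝ) * ((m:ℝ) - 1) / 2) * ((N:ℝ) * p ^ 2) ≤ x ^ 2 / 2 * N := by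
      have hx2 : x ^ 2 = (m:ℝ) ^ 2 * p ^ 2 := by rw [hx]; ring
      nlinarith [mul_nonneg (mul_nonneg hN0 (sq_nonneg p)) hm0']
    linarith
  have hmc1 : (m:ℝ) * c1 = N * x := by rw [hc1R, hx]; ring
  have hfin : (1/4:ℝ) * N ≤ N * x - x ^ 2 / 2 * N :=
    quad_bound _ _ hN0 hmspec hub.le
  have hchain : N * x - x ^ 2 / 2 * N ≤ (F.card : ℝ) := by
    have := hbon
    rw [hsum1] at this
    linarith
  linarith
end

section
/- Let n, k, ℓ be integers with n ≥ 2^10, k ≥ 10, 3 ≤ ℓ ≤ n/32, and kℓ ≤ n. Then ℓ + (n−ℓ)/(2k)^{1/ℓ} ≥ 3ℓ log₂ k. -/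
lemma two_rpow_lb' {y : ℝ} (hy : 0 ≤ y) : 1 + 0.693 * y ≤ (2:ℝ) ^ y := by
  rw [Real.rpow_def_of_pos two_pos]
  have h := Real.add_one_le_exp (Real.log 2 * y)
  have hl : (0.6931471803:ℝ) < Real.log 2 := Real.log_two_gt_d9
  nlinarith

lemma rpow_nat_eq' (m : ℕ) : (2:ℝ) ^ ((m:ℝ)) = ((2^m : ℕ) : ℝ) := by
  rw [Real.rpow_natCast]; push_cast; ring

lemma logb_le_of_le' {k m : ℕ} (hk : 0 < k) (h : k ≤ 2^m) : Real.logb 2 k ≤ m := by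
  rw [Real.logb_le_iff_le_rpow one_lt_two (by exact_mod_cast hk), rpow_nat_eq']
  exact_mod_cast h

lemma le_logb_of_le' {k m : ℕ} (hk : 0 < k) (h : 2^m ≤ k) : (m:ℝ) ≤ Real.logb 2 k := by
  rw [Real.le_logb_iff_rpow_le one_lt_two (by exact_mod_cast hk), rpow_nat_eq']
  exact_mod_cast h

set_option maxHeartbeats 2000000 in
theorem stmt6 (n k ℓ : ℕ) (hn : 2 ^ 10 ≤ n) (hk : 10 ≤ k)
    (hℓ3 : 3 ≤ ℓ) (hℓn : (ℓ : ℝ) ≤ (n : ℝ) / 32) (hkl : k * ℓ ≤ n) :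
    3 * (ℓ : ℝ) * Real.logb 2 k ≤
      (ℓ : ℝ) + ((n : ℝ) - ℓ) / ((2 * k : ℝ) ^ ((1 : ℝ) / ℓ)) := by
  have hk0 : (0:ℝ) < k := by
    have : (0:ℕ) < k := by omega
    exact_mod_cast this
  have hkr : (10:ℝ) ≤ k := by exact_mod_cast hk
  have hℓr : (3:ℝ) ≤ ℓ := by exact_mod_cast hℓ3
  have hℓ0 : (0:ℝ) < ℓ := by linarith
  have hnr : (1024:ℝ) ≤ n := by exact_mod_cast hn
  have hklr : (k:ℝ) * ℓ ≤ n := by exact_mod_cast hkl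
  set L := Real.logb 2 k with hLdef
  have hkL : (2:ℝ) ^ L = k := Real.rpow_logb two_pos (by norm_num) hk0
  have hL3 : (3:ℝ) ≤ L := by
    have h := le_logb_of_le' (k := k) (m := 3) (by omega) (by omega)
    exact_mod_cast h
  have hxeq : (2 * (k:ℝ)) ^ ((1:ℝ)/ℓ) = (2:ℝ) ^ ((L+1)/ℓ) := by
    have h2k : 2 * (k:ℝ) = (2:ℝ) ^ (L+1) := by
      rw [Real.rpow_add two_pos, Real.rpow_one, hkL]; ring
    rw [h2k, ← Real.rpow_mul (by norm_num : (0:ℝ) ≤ 2)]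
    congr 1; field_simp
  rw [hxeq]
  set x := (2:ℝ) ^ ((L+1)/ℓ) with hxdef
  have hx0 : (0:ℝ) < x := Real.rpow_pos_of_pos two_pos _
  have hnl0 : (0:ℝ) ≤ (n:ℝ) - ℓ := by linarith
  have h992 : (992:ℝ) ≤ (n:ℝ) - ℓ := by linarith
  have hnkl : ((k:ℝ)-1)*ℓ ≤ (n:ℝ) - ℓ := by nlinarith
  rcases le_or_gt (2*k) (2^ℓ) with hA | hB
  · -- Case A : L + 1 ≤ ℓ, x ≤ 2
    have hAr : (2:ℝ)^(L+1) ≤ (2:ℝ)^((ℓ:ℕ):ℝ) := by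
      rw [Real.rpow_add two_pos, Real.rpow_one, hkL, rpow_nat_eq']
      have : ((2*k:ℕ):ℝ) ≤ ((2^ℓ:ℕ):ℝ) := by exact_mod_cast hA
      push_cast at this ⊢; linarith
    have hs : L + 1 ≤ (ℓ:ℝ) := (Real.rpow_le_rpow_left_iff one_lt_two).mp hAr
    have hx2 : x ≤ 2 := by
      have h1 : (L+1)/ℓ ≤ 1 := by rw [div_le_one hℓ0]; exact hs
      have h2 := Real.rpow_le_rpow_of_exponent_le (by norm_num : (1:ℝ) ≤ 2) h1
      rw [Real.rpow_one] at h2; exact h2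
    have hdiv : ((n:ℝ)-ℓ)/2 ≤ ((n:ℝ)-ℓ)/x := by gcongr
    rcases le_or_gt k 40 with hk40 | hk41
    · -- A1
      have hk40r : (k:ℝ) ≤ 40 := by exact_mod_cast hk40
      have h40 : (40:ℝ) ≤ (2:ℝ) ^ ((16:ℝ)/3) := by
        have h3 : ((2:ℝ) ^ ((16:ℝ)/3)) ^ (3:ℕ) = 65536 := by
          rw [← Real.rpow_natCast ((2:ℝ) ^ ((16:ℝ)/3)) 3,
            ← Real.rpow_mul (by norm_num : (0:ℝ) ≤ 2)]
          rw [show (16:ℝ)/3 * (3:ℕ) = ((16:ℕ):ℝ) by push_cast; ring, Real.rpow_natCast]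
          norm_num
        have hpos : (0:ℝ) ≤ (2:ℝ) ^ ((16:ℝ)/3) := (Real.rpow_pos_of_pos two_pos _).le
        apply le_of_pow_le_pow_left₀ (n := 3) (by norm_num) hpos
        rw [h3]; norm_num
      have hL163 : L ≤ 16/3 := by
        rw [hLdef, Real.logb_le_iff_le_rpow one_lt_two hk0]
        linarith
      have key : 3 * (ℓ:ℝ) * L ≤ (ℓ:ℝ) + ((n:ℝ)-ℓ)/2 := by
        have := mul_le_mul_of_nonneg_left hL163 (by positivity : (0:ℝ) ≤ 3*(ℓ:ℝ))
        linarith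
      linarith
    · -- A2
      have hk41r : (41:ℝ) ≤ k := by exact_mod_cast hk41
      have hL5 : (5:ℝ) ≤ L := by
        have h := le_logb_of_le' (k := k) (m := 5) (by omega) (by omega)
        exact_mod_cast h
      have hkexp : 32 * (1 + 0.693 * (L - 5)) ≤ (k:ℝ) := by
        have h1 := two_rpow_lb' (y := L - 5) (by linarith)
        have h2 : (2:ℝ)^L = (2:ℝ)^((5:ℕ):ℝ) * (2:ℝ)^(L-5) := by
          rw [← Real.rpow_add two_pos]; congr 1; push_cast; ring
        rw [rpow_nat_eq'] at h2
        rw [← hkL, h2]; push_cast; nlinarith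
      have h6L : (0:ℝ) ≤ (k:ℝ) + 1 - 6 * L := by linarith
      have hp := mul_nonneg hℓ0.le h6L
      have key : 3 * (ℓ:ℝ) * L ≤ (ℓ:ℝ) + ((n:ℝ)-ℓ)/2 := by nlinarith
      linarith
  · -- Case B : ℓ < L + 1
    have hBr : (2:ℝ)^((ℓ:ℕ):ℝ) < (2:ℝ)^(L+1) := by
      rw [Real.rpow_add two_pos, Real.rpow_one, hkL, rpow_nat_eq']
      have : ((2^ℓ:ℕ):ℝ) < ((2*k:ℕ):ℝ) := by exact_mod_cast hB
      push_cast at this ⊢; linarith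
    have hs : (ℓ:ℝ) < L + 1 := (Real.rpow_lt_rpow_left_iff one_lt_two).mp hBr
    rcases le_or_gt (L+1) (2*(ℓ:ℝ)) with hii | hi
    · -- B-ii : x ≤ 4
      have hx4 : x ≤ 4 := by
        have h1 : (L+1)/ℓ ≤ ((2:ℕ):ℝ) := by
          rw [div_le_iff₀ hℓ0]; push_cast; linarith
        have h2 := Real.rpow_le_rpow_of_exponent_le (by norm_num : (1:ℝ) ≤ 2) h1
        rw [rpow_nat_eq'] at h2; norm_num at h2; exact h2
      rcases le_or_gt k 256 with hk256 | hk257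
      · -- k ≤ 256 : L ≤ 8, use n ≥ 1024
        have hL8 : L ≤ 8 := by
          have h := logb_le_of_le' (k := k) (m := 8) (by omega) (by omega)
          exact_mod_cast h
        have hdiv : (248:ℝ) ≤ ((n:ℝ)-ℓ)/x := by
          rw [le_div_iff₀ hx0]; nlinarith
        have hp := mul_nonneg (by linarith : (0:ℝ) ≤ 9 - ℓ)
          (by linarith : (0:ℝ) ≤ 3*L - 1)
        linarith
      · -- k ≥ 257 : L ≥ 8, use n ≥ kℓ
        have hL8 : (8:ℝ) ≤ L := by
          have h := le_logb_of_le' (k := k) (m := 8) (by omega) (by omega)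
          exact_mod_cast h
        have hkexp : 256 * (1 + 0.693 * (L - 8)) ≤ (k:ℝ) := by
          have h1 := two_rpow_lb' (y := L - 8) (by linarith)
          have h2 : (2:ℝ)^L = (2:ℝ)^((8:ℕ):ℝ) * (2:ℝ)^(L-8) := by
            rw [← Real.rpow_add two_pos]; congr 1; push_cast; ring
          rw [rpow_nat_eq'] at h2
          rw [← hkL, h2]; push_cast; nlinarith
        have h12L : (0:ℝ) ≤ (k:ℝ) + 3 - 12 * L := by linarith
        have hdiv : ((k:ℝ)-1)*ℓ/4 ≤ ((n:ℝ)-ℓ)/x :=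
          div_le_div₀ hnl0 hnkl hx0 hx4
        have hp := mul_nonneg hℓ0.le h12L
        linarith
    · -- B-i : x ≤ 2^((L+1)/3)
      have hc3 : (L+1)/(ℓ:ℝ) ≤ (L+1)/3 :=
        div_le_div_of_nonneg_left (by linarith) (by norm_num) hℓr
      have hxc : x ≤ (2:ℝ)^((L+1)/3) :=
        Real.rpow_le_rpow_of_exponent_le (by norm_num : (1:ℝ) ≤ 2) hc3
      rcases le_or_gt k 256 with hk256 | hk257
      · -- k ≤ 256 : L ≤ 8, x ≤ 8, ℓ ≤ (L+1)/2
        have hL8 : L ≤ 8 := by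
          have h := logb_le_of_le' (k := k) (m := 8) (by omega) (by omega)
          exact_mod_cast h
        have hx8 : x ≤ 8 := by
          have h1 : (L+1)/3 ≤ ((3:ℕ):ℝ) := by push_cast; linarith
          have h2 := Real.rpow_le_rpow_of_exponent_le (by norm_num : (1:ℝ) ≤ 2) h1
          rw [rpow_nat_eq'] at h2; norm_num at h2; linarith [hxc]
        have hdiv : (124:ℝ) ≤ ((n:ℝ)-ℓ)/x := by
          rw [le_div_iff₀ hx0]; nlinarith
        have hp1 := mul_nonneg (by linarith : (0:ℝ) ≤ (L+1)/2 - ℓ)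
          (by linarith : (0:ℝ) ≤ 3*L - 1)
        have hp2 := mul_nonneg (by linarith : (0:ℝ) ≤ 8 - L)
          (by linarith : (0:ℝ) ≤ 3*L - 1)
        linarith
      · -- k ≥ 257 : L ≥ 8
        have hL8 : (8:ℝ) ≤ L := by
          have h := le_logb_of_le' (k := k) (m := 8) (by omega) (by omega)
          exact_mod_cast h
        set d : ℝ := (2*L-1)/3 with hddef
        have hd5 : (5:ℝ) ≤ d := by rw [hddef]; linarith
        have hdL : d + (L+1)/3 = L := by rw [hddef]; ring
        have h2d : 3 * L ≤ (2:ℝ)^d := by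
          have h1 := two_rpow_lb' (y := d - 5) (by linarith)
          have h2 : (2:ℝ)^d = (2:ℝ)^((5:ℕ):ℝ) * (2:ℝ)^(d-5) := by
            rw [← Real.rpow_add two_pos]; congr 1; push_cast; ring
          rw [rpow_nat_eq'] at h2
          rw [h2]; push_cast
          have hdd : d = (2*L-1)/3 := hddef
          nlinarith
        have hc0 : (1:ℝ) ≤ (2:ℝ)^((L+1)/3) :=
          Real.one_le_rpow (by norm_num) (by linarith)
        have hkd : ((2:ℝ)^d - 1) * (2:ℝ)^((L+1)/3) ≤ (k:ℝ) - 1 := by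
          have hmul : (2:ℝ)^d * (2:ℝ)^((L+1)/3) = (2:ℝ)^L := by
            rw [← Real.rpow_add two_pos, hdL]
          nlinarith [hkL]
        have hdiv : ((2:ℝ)^d - 1) * ℓ ≤ ((n:ℝ)-ℓ)/x := by
          rw [le_div_iff₀ hx0]
          have h2d1 : (0:ℝ) ≤ (2:ℝ)^d - 1 := by nlinarith
          calc ((2:ℝ)^d - 1) * ℓ * x ≤ ((2:ℝ)^d - 1) * ℓ * (2:ℝ)^((L+1)/3) := by
                apply mul_le_mul_of_nonneg_left hxc (by positivity)
            _ = (((2:ℝ)^d - 1) * (2:ℝ)^((L+1)/3)) * ℓ := by ring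
            _ ≤ ((k:ℝ)-1) * ℓ := mul_le_mul_of_nonneg_right hkd hℓ0.le
            _ ≤ (n:ℝ) - ℓ := hnkl
        have hp := mul_le_mul_of_nonneg_right h2d hℓ0.le
        linarith
end

section
/- Let n ≥ 2^10 be a real number. Then for every real x with 3 ≤ x ≤ n/32, one has 3x·(2n/x)^{1/x}·log₂(2n/x) ≤ 31n/32. -/
/-- Core estimate: if `T ≤ t`, `0 ≤ e < 1/2`, and the numeric condition holds,
then `6 * t^e * logb 2 t ≤ 31/32 * t`. -/
lemma core_aux (t e T : ℝ) (he : 0 ≤ e) (he2 : e < 1/2) (hT1 : 1 ≤ T) (hTt : T ≤ t)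
    (hnum : 192 ≤ (1/2 - e) * 58 * Real.sqrt T) :
    6 * t ^ e * Real.logb 2 t ≤ 31/32 * t := by
  have ht1 : 1 ≤ t := hT1.trans hTt
  have ht0 : 0 < t := by linarith
  obtain ⟨d, hd⟩ : ∃ d : ℝ, d = 1/2 - e := ⟨_, rfl⟩
  rw [← hd] at hnum
  have hd0 : 0 < d := by rw [hd]; linarith
  have hE1 : (0:ℝ) < Real.exp 1 := Real.exp_pos 1
  have hl2 : (0:ℝ) < Real.log 2 := Real.log_pos (by norm_num)
  have hte : (0:ℝ) < t ^ e := Real.rpow_pos_of_pos ht0 e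
  have hlog : d * Real.log t ≤ t ^ d / Real.exp 1 := by
    have h2 := Real.log_le_sub_one_of_pos (show (0:ℝ) < t ^ d / Real.exp 1 by positivity)
    rw [Real.log_div (by positivity) (Real.exp_pos 1).ne', Real.log_exp] at h2
    have h3 : Real.log (t ^ d) = d * Real.log t := Real.log_rpow ht0 d
    linarith [h2, h3]
  have hts : t ^ e * t ^ d = Real.sqrt t := by
    rw [← Real.rpow_add ht0, Real.sqrt_eq_rpow]
    congr 1
    rw [hd]; ring
  have hsq : Real.sqrt T ≤ Real.sqrt t := Real.sqrt_le_sqrt hTt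
  have hsT : (0:ℝ) ≤ Real.sqrt T := Real.sqrt_nonneg T
  have hst : Real.sqrt t * Real.sqrt t = t := Real.mul_self_sqrt ht0.le
  have hA : (1.884:ℝ) ≤ Real.exp 1 * Real.log 2 := by
    nlinarith [Real.exp_one_gt_d9, Real.log_two_gt_d9]
  have hC1 : 6 * t ^ e * Real.log t * (d * Real.exp 1) ≤ 6 * Real.sqrt t := by
    have h4 : Real.exp 1 * (d * Real.log t) ≤ t ^ d := by
      have h5 := mul_le_mul_of_nonneg_left hlog hE1.le
      have h6 : Real.exp 1 * (t ^ d / Real.exp 1) = t ^ d := by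
        field_simp
      linarith [h5, h6]
    calc 6 * t ^ e * Real.log t * (d * Real.exp 1)
        = 6 * (t ^ e * (Real.exp 1 * (d * Real.log t))) := by ring
      _ ≤ 6 * (t ^ e * t ^ d) := by nlinarith [h4, hte]
      _ = 6 * Real.sqrt t := by rw [hts]
  have h6 : (6:ℝ) ≤ 31/32 * (Real.exp 1 * Real.log 2) * (d * Real.sqrt T) := by
    nlinarith [hnum, mul_le_mul_of_nonneg_left hA (mul_nonneg hd0.le hsT),
      mul_nonneg hd0.le hsT]
  have hC2 : 6 * Real.sqrt t ≤ 31/32 * Real.log 2 * (d * Real.exp 1) * t := by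
    have h7 : 6 * Real.sqrt t
        ≤ (31/32 * (Real.exp 1 * Real.log 2) * (d * Real.sqrt T)) * Real.sqrt t :=
      mul_le_mul_of_nonneg_right h6 (Real.sqrt_nonneg t)
    have h8 : (31/32 * (Real.exp 1 * Real.log 2) * d) * (Real.sqrt T * Real.sqrt t)
        ≤ (31/32 * (Real.exp 1 * Real.log 2) * d) * (Real.sqrt t * Real.sqrt t) := by
      apply mul_le_mul_of_nonneg_left _ (by positivity)
      exact mul_le_mul_of_nonneg_right hsq (Real.sqrt_nonneg t)
    calc 6 * Real.sqrt t
        ≤ (31/32 * (Real.exp 1 * Real.log 2) * (d * Real.sqrt T)) * Real.sqrt t := h7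
      _ = (31/32 * (Real.exp 1 * Real.log 2) * d) * (Real.sqrt T * Real.sqrt t) := by ring
      _ ≤ (31/32 * (Real.exp 1 * Real.log 2) * d) * (Real.sqrt t * Real.sqrt t) := h8
      _ = 31/32 * Real.log 2 * (d * Real.exp 1) * t := by rw [hst]; ring
  have hde : (0:ℝ) < d * Real.exp 1 := by positivity
  have hfin : 6 * t ^ e * Real.log t ≤ 31/32 * t * Real.log 2 := by
    have h9 : (6 * t ^ e * Real.log t) * (d * Real.exp 1)
        ≤ (31/32 * t * Real.log 2) * (d * Real.exp 1) := by nlinarith [hC1, hC2]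
    exact le_of_mul_le_mul_right h9 hde
  have hlb : Real.logb 2 t = Real.log t / Real.log 2 := Real.log_div_log.symm
  rw [hlb, show 6 * t ^ e * (Real.log t / Real.log 2) = 6 * t ^ e * Real.log t / Real.log 2
    from by ring, div_le_iff₀ hl2]
  linarith [hfin]

theorem stmt7 (n : ℝ) (hn : 2 ^ 10 ≤ n) :
    ∀ x : ℝ, 3 ≤ x → x ≤ n / 32 →
      3 * x * (2 * n / x) ^ ((1 : ℝ) / x) * Real.logb 2 (2 * n / x) ≤ 31 * n / 32 := by
  intro x hx3 hxn
  have hn' : (1024:ℝ) ≤ n := by norm_num at hn; linarith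
  have hx0 : (0:ℝ) < x := by linarith
  set t : ℝ := 2 * n / x with htdef
  have ht0 : (0:ℝ) < t := by rw [htdef]; positivity
  have hxt : x * t = 2 * n := by rw [htdef]; field_simp
  have ht64 : (64:ℝ) ≤ t := by
    rw [htdef, le_div_iff₀ hx0]
    have : x ≤ n / 32 := hxn
    nlinarith
  have ht1 : (1:ℝ) ≤ t := by linarith
  suffices h : 6 * t ^ ((1:ℝ)/x) * Real.logb 2 t ≤ 31/32 * t by
    have h2 := mul_le_mul_of_nonneg_left h (by positivity : (0:ℝ) ≤ x/2)
    nlinarith [h2, hxt]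
  have key : ∀ e T : ℝ, 0 ≤ e → 1/x ≤ e → e < 1/2 → 1 ≤ T → T ≤ t →
      192 ≤ (1/2 - e) * 58 * Real.sqrt T →
      6 * t ^ ((1:ℝ)/x) * Real.logb 2 t ≤ 31/32 * t := by
    intro e T he hxe he2 hT1 hTt hnum
    have h1 : t ^ ((1:ℝ)/x) ≤ t ^ e := Real.rpow_le_rpow_of_exponent_le ht1 hxe
    have h2 := core_aux t e T he he2 hT1 hTt hnum
    have hL : 0 ≤ Real.logb 2 t := Real.logb_nonneg (by norm_num) ht1
    nlinarith [h1, h2, hL]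
  have sqrt_lb : ∀ a T : ℝ, 0 ≤ a → a^2 ≤ T → a ≤ Real.sqrt T := by
    intro a T ha haT
    have h := Real.sq_sqrt (le_trans (by positivity) haT)
    nlinarith [Real.sqrt_nonneg T, h]
  rcases le_total x 4 with h4 | h4
  · -- x ∈ [3,4] : e = 1/3, T = 512
    refine key (1/3) 512 (by norm_num) ?_ (by norm_num) (by norm_num) ?_ ?_
    · exact one_div_le_one_div_of_le (by norm_num) hx3
    · rw [htdef, le_div_iff₀ hx0]; nlinarith
    · have := sqrt_lb 22 512 (by norm_num) (by norm_num)
      nlinarith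
  rcases le_total x 6 with h6 | h6
  · -- x ∈ [4,6] : e = 1/4, T = 1024/3
    refine key (1/4) (1024/3) (by norm_num) ?_ (by norm_num) (by norm_num) ?_ ?_
    · exact one_div_le_one_div_of_le (by norm_num) h4
    · rw [htdef, le_div_iff₀ hx0]; nlinarith
    · have := sqrt_lb 18 (1024/3) (by norm_num) (by norm_num)
      nlinarith
  rcases le_total x 8 with h8 | h8
  · -- x ∈ [6,8] : e = 1/6, T = 256
    refine key (1/6) 256 (by norm_num) ?_ (by norm_num) (by norm_num) ?_ ?_
    · exact one_div_le_one_div_of_le (by norm_num) h6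
    · rw [htdef, le_div_iff₀ hx0]; nlinarith
    · have := sqrt_lb 16 256 (by norm_num) (by norm_num)
      nlinarith
  rcases le_total x 16 with h16 | h16
  · -- x ∈ [8,16] : e = 1/8, T = 128
    refine key (1/8) 128 (by norm_num) ?_ (by norm_num) (by norm_num) ?_ ?_
    · exact one_div_le_one_div_of_le (by norm_num) h8
    · rw [htdef, le_div_iff₀ hx0]; nlinarith
    · have := sqrt_lb 11 128 (by norm_num) (by norm_num)
      nlinarith
  · -- x ≥ 16 : e = 1/16, T = 64
    refine key (1/16) 64 (by norm_num) ?_ (by norm_num) (by norm_num) ?_ ?_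
    · exact one_div_le_one_div_of_le (by norm_num) h16
    · exact ht64
    · have := sqrt_lb 8 64 (by norm_num) (by norm_num)
      nlinarith
end

section
/- Let n, k, ℓ be integers with n ≥ 2^10, k ≥ 10, 3 ≤ ℓ ≤ n/32, and kℓ ≤ n. Let s₀ = ℓ + (n−ℓ)/(2k)^{1/ℓ} and s = ⌈s₀⌉. Then 1/2 ≤ k·((s−ℓ)/(n−ℓ))^ℓ ≤ 1. -/
theorem stmt8 (n k ℓ : ℕ) (hn : 2 ^ 10 ≤ n) (hk : 10 ≤ k)
    (hℓ3 : 3 ≤ ℓ) (hℓn : (ℓ : ℝ) ≤ (n : ℝ) / 32) (hkl : k * ℓ ≤ n)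
    (s₀ : ℝ) (hs₀ : s₀ = (ℓ : ℝ) + ((n : ℝ) - ℓ) / ((2 * k : ℝ) ^ ((1 : ℝ) / ℓ)))
    (s : ℤ) (hs : s = ⌈s₀⌉) :
    1 / 2 ≤ (k : ℝ) * (((s : ℝ) - ℓ) / ((n : ℝ) - ℓ)) ^ ℓ ∧
      (k : ℝ) * (((s : ℝ) - ℓ) / ((n : ℝ) - ℓ)) ^ ℓ ≤ 1 := by
  have hL3 : (3:ℝ) ≤ (ℓ:ℝ) := by exact_mod_cast hℓ3
  have hLpos : (0:ℝ) < (ℓ:ℝ) := by linarith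
  have hN : (1024:ℝ) ≤ (n:ℝ) := by exact_mod_cast hn
  have hK : (10:ℝ) ≤ (k:ℝ) := by exact_mod_cast hk
  have hkL : (k:ℝ) * (ℓ:ℝ) ≤ (n:ℝ) := by exact_mod_cast hkl
  have hNL : (0:ℝ) < (n:ℝ) - ℓ := by linarith
  set c := ((2*k:ℝ)) ^ ((1:ℝ)/(ℓ:ℝ)) with hc
  have h2k : (1:ℝ) ≤ 2*k := by linarith
  have hc1 : (1:ℝ) ≤ c := Real.one_le_rpow h2k (by positivity)
  have hcpos : (0:ℝ) < c := by linarith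
  have hcl : c ^ ℓ = 2*(k:ℝ) := by
    rw [hc, ← Real.rpow_natCast _ ℓ, ← Real.rpow_mul (by linarith), one_div,
      inv_mul_cancel₀ (ne_of_gt hLpos), Real.rpow_one]
  have hc3 : c ^ 3 ≤ 2*(k:ℝ) := by
    have h1 : c ^ (3:ℕ) = (2*(k:ℝ)) ^ ((1:ℝ)/(ℓ:ℝ) * 3) := by
      rw [hc, ← Real.rpow_natCast _ 3, ← Real.rpow_mul (by linarith)]
      norm_num
    rw [h1]
    calc (2*(k:ℝ)) ^ ((1:ℝ)/(ℓ:ℝ) * 3) ≤ (2*(k:ℝ)) ^ (1:ℝ) := by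
          apply Real.rpow_le_rpow_of_exponent_le h2k
          rw [div_mul_eq_mul_div, one_mul, div_le_one hLpos]; linarith
      _ = 2*(k:ℝ) := Real.rpow_one _
  -- L*c ≤ N/8
  have hLc : (ℓ:ℝ) * c ≤ (n:ℝ)/8 := by
    have h3 : ((ℓ:ℝ) * c)^3 ≤ ((n:ℝ)/8)^3 := by
      have e1 : ((ℓ:ℝ) * c)^3 = (ℓ:ℝ)^3 * c^3 := by ring
      have e2 : (ℓ:ℝ)^3 * c^3 ≤ (ℓ:ℝ)^3 * (2*(k:ℝ)) :=
        mul_le_mul_of_nonneg_left hc3 (by positivity)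
      have e3 : (ℓ:ℝ)^2 ≤ ((n:ℝ)/32)^2 := pow_le_pow_left₀ (by linarith) hℓn 2
      nlinarith [sq_nonneg ((ℓ:ℝ)), mul_le_mul_of_nonneg_right hkL (sq_nonneg ((ℓ:ℝ)))]
    exact le_of_pow_le_pow_left₀ (by norm_num) (by positivity) h3
  set t := c / ((n:ℝ) - ℓ) with htdef
  have ht0 : 0 ≤ t := by positivity
  have hLt : (ℓ:ℝ) * t ≤ Real.log 2 := by
    have hlog : (0.6931471803 : ℝ) < Real.log 2 := Real.log_two_gt_d9
    have h8 : (n:ℝ)/8 ≤ Real.log 2 * ((n:ℝ) - ℓ) := by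
      nlinarith [mul_le_mul_of_nonneg_right hlog.le hNL.le]
    rw [htdef, mul_div_assoc' , div_le_iff₀ hNL]
    calc (ℓ:ℝ) * c ≤ (n:ℝ)/8 := hLc
      _ ≤ Real.log 2 * ((n:ℝ) - ℓ) := h8
  have hexp : (1 + t)^ℓ ≤ 2 := by
    calc (1 + t)^ℓ ≤ (Real.exp t)^ℓ :=
          pow_le_pow_left₀ (by linarith) (by linarith [Real.add_one_le_exp t]) ℓ
      _ = Real.exp ((ℓ:ℝ) * t) := by rw [← Real.exp_nat_mul]
      _ ≤ Real.exp (Real.log 2) := Real.exp_le_exp.mpr hLt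
      _ = 2 := Real.exp_log (by norm_num)
  -- bounds on s
  have hsl : s₀ ≤ (s:ℝ) := by rw [hs]; exact_mod_cast Int.le_ceil s₀
  have hsu : (s:ℝ) ≤ s₀ + 1 := by
    rw [hs]; exact_mod_cast (Int.ceil_lt_add_one s₀).le
  have hb0 : (1:ℝ)/c ≤ ((s:ℝ) - ℓ) / ((n:ℝ) - ℓ) := by
    rw [div_le_div_iff₀ hcpos hNL]
    have : s₀ - (ℓ:ℝ) = ((n:ℝ) - ℓ)/c := by rw [hs₀]; ring
    have h' : ((n:ℝ) - ℓ)/c ≤ (s:ℝ) - ℓ := by rw [← this]; linarith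
    calc 1 * ((n:ℝ) - ℓ) = (((n:ℝ) - ℓ)/c) * c := by field_simp
      _ ≤ ((s:ℝ) - ℓ) * c := mul_le_mul_of_nonneg_right h' hcpos.le
  have hb1 : ((s:ℝ) - ℓ) / ((n:ℝ) - ℓ) ≤ 1/c + 1/((n:ℝ) - ℓ) := by
    have : (s:ℝ) - ℓ ≤ ((n:ℝ) - ℓ)/c + 1 := by
      have : s₀ - (ℓ:ℝ) = ((n:ℝ) - ℓ)/c := by rw [hs₀]; ring
      linarith
    rw [div_le_iff₀ hNL]
    have hcc : ((1:ℝ)/c + 1/((n:ℝ) - ℓ)) * ((n:ℝ) - ℓ) = ((n:ℝ) - ℓ)/c + 1 := by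
      field_simp
    rw [hcc]; exact this
  have hbase0 : (0:ℝ) ≤ ((s:ℝ) - ℓ) / ((n:ℝ) - ℓ) := le_trans (by positivity) hb0
  constructor
  · have hp : ((1:ℝ)/c)^ℓ ≤ (((s:ℝ) - ℓ) / ((n:ℝ) - ℓ))^ℓ :=
      pow_le_pow_left₀ (by positivity) hb0 ℓ
    have he : ((1:ℝ)/c)^ℓ = 1/(2*(k:ℝ)) := by rw [div_pow, one_pow, hcl]
    rw [he] at hp
    have hk0 : (0:ℝ) < (k:ℝ) := by linarith
    calc (1:ℝ)/2 = (k:ℝ) * (1/(2*(k:ℝ))) := by field_simp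
      _ ≤ (k:ℝ) * (((s:ℝ) - ℓ) / ((n:ℝ) - ℓ))^ℓ :=
        mul_le_mul_of_nonneg_left hp hk0.le
  · have hp : (((s:ℝ) - ℓ) / ((n:ℝ) - ℓ))^ℓ ≤ ((1:ℝ)/c + 1/((n:ℝ) - ℓ))^ℓ :=
      pow_le_pow_left₀ hbase0 hb1 ℓ
    have he : (1:ℝ)/c + 1/((n:ℝ) - ℓ) = (1/c) * (1 + t) := by
      rw [htdef]; field_simp
    have he2 : ((1:ℝ)/c + 1/((n:ℝ) - ℓ))^ℓ = (1/(2*(k:ℝ))) * (1+t)^ℓ := by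
      rw [he, mul_pow, div_pow, one_pow, hcl]
    rw [he2] at hp
    have hk0 : (0:ℝ) < (k:ℝ) := by linarith
    have : (k:ℝ) * (((s:ℝ) - ℓ) / ((n:ℝ) - ℓ))^ℓ ≤ (k:ℝ) * ((1/(2*(k:ℝ))) * (1+t)^ℓ) :=
      mul_le_mul_of_nonneg_left hp hk0.le
    have heq : (k:ℝ) * ((1/(2*(k:ℝ))) * (1+t)^ℓ) = (1+t)^ℓ / 2 := by
      field_simp
    rw [heq] at this
    linarith
end

section
/- Let n, s, t be natural numbers with s ≥ 1, s + t ≤ n, and 2s ≤ n − t + 1. Then C(n−t, s) ≥ exp(−2st/(n−t+1)) · C(n,s). -/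
lemma exp_neg_two_le (x : ℝ) (hx0 : 0 ≤ x) (hx : x ≤ 1/2) :
    Real.exp (-(2*x)) ≤ 1 - x := by
  have h := Real.add_one_le_exp (2*x)
  have h2 : Real.exp (-(2*x)) * Real.exp (2*x) = 1 := by
    rw [← Real.exp_add]; simp
  nlinarith [Real.exp_pos (-(2*x)), mul_nonneg hx0 (by linarith : (0:ℝ) ≤ 1 - 2*x)]

lemma aux15 (n s : ℕ) (hs : 1 ≤ s) : ∀ t : ℕ, s + t ≤ n → 2 * s ≤ n - t + 1 →
    Real.exp (-(2 * (s:ℝ) * t) / (((n - t : ℕ):ℝ) + 1)) * (n.choose s : ℝ) ≤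
      ((n - t).choose s : ℝ)
  | 0, hst, h2s => by simp
  | (t+1), hst, h2s => by
    have hst' : s + t ≤ n := by omega
    have hm1 : 1 ≤ n - t := by omega
    have h2s' : 2 * s ≤ n - t := by omega
    have ih := aux15 n s hs t hst' (by omega)
    set m := n - t with hm
    have hmn : n - (t+1) = m - 1 := by omega
    have hs_le : s + 1 ≤ m := by omega
    have hmR : (1:ℝ) ≤ (m:ℝ) := by exact_mod_cast hm1
    have hmpos : (0:ℝ) < (m:ℝ) := by linarith
    have hsR : (s:ℝ) ≤ (m:ℝ) := by exact_mod_cast (by omega : s ≤ m)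
    have hsnn : (0:ℝ) ≤ (s:ℝ) := by positivity
    rw [hmn]
    have hcast : ((m - 1 : ℕ) : ℝ) = (m:ℝ) - 1 := by
      push_cast [Nat.cast_sub hm1]; ring
    rw [hcast]
    have hden : (m:ℝ) - 1 + 1 = (m:ℝ) := by ring
    rw [hden]
    -- identity: C(m-1,s) * m = C(m,s) * (m - s)
    have hid : ((m-1).choose s : ℝ) * m = (m.choose s : ℝ) * ((m:ℝ) - s) := by
      have := Nat.choose_mul_succ_eq (m-1) s
      have h1 : m - 1 + 1 = m := by omega
      rw [h1] at this
      have : ((m-1).choose s * m : ℕ) = (m.choose s * (m - s) : ℕ) := this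
      have := congrArg (fun k : ℕ => (k:ℝ)) this
      push_cast [Nat.cast_sub (by omega : s ≤ m)] at this
      linarith [this]
    -- step B: exp(-(2st)/m) ≤ exp(-(2st)/(m+1))
    have hB : Real.exp (-(2*(s:ℝ)*t)/(m:ℝ)) ≤ Real.exp (-(2*(s:ℝ)*t)/((m:ℝ)+1)) := by
      apply Real.exp_le_exp.2
      rw [neg_div, neg_div, neg_le_neg_iff]
      apply div_le_div_of_nonneg_left (by positivity) hmpos (by linarith)
    -- step D key: exp(-(2s)/m) ≤ 1 - s/m
    have hD : Real.exp (-(2*(s:ℝ))/(m:ℝ)) ≤ 1 - (s:ℝ)/(m:ℝ) := by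
      have := exp_neg_two_le ((s:ℝ)/(m:ℝ)) (by positivity)
        (by rw [div_le_iff₀ hmpos]
            have h2R : (2:ℝ)*s ≤ m := by exact_mod_cast h2s'
            linarith)
      have harg : -(2*((s:ℝ)/(m:ℝ))) = -(2*(s:ℝ))/(m:ℝ) := by field_simp
      rwa [harg] at this
    have hCpos : (0:ℝ) ≤ (m.choose s : ℝ) := by positivity
    have hsplit : Real.exp (-(2*(s:ℝ)*(t+1))/(m:ℝ)) =
        Real.exp (-(2*(s:ℝ))/(m:ℝ)) * Real.exp (-(2*(s:ℝ)*t)/(m:ℝ)) := by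
      rw [← Real.exp_add]; congr 1; field_simp; ring
    have hCn : (0:ℝ) ≤ (n.choose s : ℝ) := by positivity
    push_cast
    calc Real.exp (-(2*(s:ℝ)*((t:ℝ)+1))/(m:ℝ)) * (n.choose s : ℝ)
        = Real.exp (-(2*(s:ℝ))/(m:ℝ)) * (Real.exp (-(2*(s:ℝ)*t)/(m:ℝ)) * (n.choose s : ℝ)) := by
          rw [← mul_assoc, ← hsplit]
      _ ≤ Real.exp (-(2*(s:ℝ))/(m:ℝ)) * (Real.exp (-(2*(s:ℝ)*t)/((m:ℝ)+1)) * (n.choose s : ℝ)) := by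
          apply mul_le_mul_of_nonneg_left (mul_le_mul_of_nonneg_right hB hCn) (Real.exp_pos _).le
      _ ≤ Real.exp (-(2*(s:ℝ))/(m:ℝ)) * (m.choose s : ℝ) := by
          apply mul_le_mul_of_nonneg_left _ (Real.exp_pos _).le
          exact_mod_cast ih
      _ ≤ (1 - (s:ℝ)/(m:ℝ)) * (m.choose s : ℝ) := mul_le_mul_of_nonneg_right hD hCpos
      _ = ((m-1).choose s : ℝ) := by
          field_simp
          linarith [hid]

theorem stmt15 (n s t : ℕ) (hs : 1 ≤ s) (hst : s + t ≤ n) (h2s : 2 * s ≤ n - t + 1) :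
    Real.exp (-(2 * (s : ℝ) * t) / ((n : ℝ) - t + 1)) * (n.choose s : ℝ) ≤
      ((n - t).choose s : ℝ) := by
  have ht : t ≤ n := by omega
  have hcast : ((n - t : ℕ):ℝ) = (n:ℝ) - t := by
    push_cast [Nat.cast_sub ht]; ring
  have := aux15 n s hs t hst h2s
  rwa [hcast] at this
end

section
/- Let d ≥ 2 and let P ⊂ ℝ^d be a set of n points with n ≥ 1500. Let ε be a real number with 1/n ≤ ε ≤ n^{−0.9}, and suppose P is ε-close to convex position, i.e., there exists X ⊆ P with |X| ≤ εn such that P \ X is in convex position. Set s = ⌈1/(6ε)⌉. Then the number of s-element subsets S ⊆ P that are in convex position is at least (2/3)·C(n,s). Equivalently, a uniformly random s-element subset of P is in convex position with probability at least 2/3. -/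
open scoped Classical

lemma inConvexPosition_subset {d : ℕ} {S Q : Finset (EuclideanSpace ℝ (Fin d))}
    (hSQ : S ⊆ Q) (hQ : InConvexPosition Q) : InConvexPosition S := by
  intro p hp hmem
  exact hQ p (hSQ hp) (convexHull_mono (by
    intro x hx
    simp only [Finset.coe_erase, Set.mem_diff, Set.mem_singleton_iff] at hx ⊢
    exact ⟨hSQ hx.1, hx.2⟩) hmem)

lemma choose_sub_bound (t : ℕ) : ∀ (k m : ℕ),
    (m + k).choose (t + 1) ≤ m.choose (t + 1) + k * (m + k - 1).choose t := by
  intro k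
  induction k with
  | zero => intro m; simp
  | succ k ih =>
    intro m
    have h1 : m + (k + 1) = (m + 1) + k := by ring
    rw [h1]
    calc ((m + 1) + k).choose (t + 1)
        ≤ (m + 1).choose (t + 1) + k * ((m + 1) + k - 1).choose t := ih (m + 1)
      _ = m.choose t + m.choose (t + 1) + k * (m + k).choose t := by
          rw [Nat.choose_succ_succ, show m + 1 + k - 1 = m + k from by omega]
      _ ≤ (m + k).choose t + m.choose (t + 1) + k * (m + k).choose t := by
          have := Nat.choose_le_choose t (Nat.le_add_right m k)
          omega
      _ = m.choose (t + 1) + (k + 1) * (m + 1 + k - 1).choose t := by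
          rw [show m + 1 + k - 1 = m + k from by omega]; ring

theorem stmt17 {d n : ℕ} (hd : 2 ≤ d) (P : Finset (EuclideanSpace ℝ (Fin d)))
    (hn : P.card = n) (hn1500 : 1500 ≤ n)
    (ε : ℝ) (hεlb : 1 / (n : ℝ) ≤ ε) (hεub : ε ≤ (n : ℝ) ^ (-(0.9 : ℝ)))
    (hclose : ∃ X ⊆ P, (X.card : ℝ) ≤ ε * n ∧ InConvexPosition (P \ X))
    (s : ℕ) (hs : s = ⌈1 / (6 * ε)⌉₊) :
    (2 / 3 : ℝ) * (n.choose s : ℝ) ≤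
      (((P.powersetCard s).filter (fun S => InConvexPosition S)).card : ℝ) := by
  obtain ⟨X, hXP, hXcard, hXconv⟩ := hclose
  set k := X.card with hk
  have hnR : (1500 : ℝ) ≤ (n : ℝ) := by exact_mod_cast hn1500
  have hnpos : (0 : ℝ) < n := by linarith
  have hεpos : 0 < ε := lt_of_lt_of_le (by positivity) hεlb
  -- ε ≤ 1/6
  have hsqrt : (6 : ℝ) ≤ Real.sqrt n := by
    have h36 : Real.sqrt 36 ≤ Real.sqrt n := Real.sqrt_le_sqrt (by linarith)
    have : Real.sqrt 36 = 6 := by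
      rw [show (36 : ℝ) = 6 ^ 2 by norm_num, Real.sqrt_sq (by norm_num)]
    linarith
  have h09 : (6 : ℝ) ≤ (n : ℝ) ^ (0.9 : ℝ) := by
    have h12 : (n : ℝ) ^ ((1 : ℝ)/2) = Real.sqrt n := (Real.sqrt_eq_rpow _).symm
    have := Real.rpow_le_rpow_of_exponent_le (show (1:ℝ) ≤ n by linarith)
      (show (1:ℝ)/2 ≤ (0.9:ℝ) by norm_num)
    rw [h12] at this
    linarith
  have hε16 : ε ≤ 1 / 6 := by
    have hneg : (n : ℝ) ^ (-(0.9 : ℝ)) = ((n : ℝ) ^ (0.9 : ℝ))⁻¹ :=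
      Real.rpow_neg (le_of_lt hnpos) _
    have : ((n : ℝ) ^ (0.9 : ℝ))⁻¹ ≤ 6⁻¹ := by
      apply inv_anti₀ (by norm_num) h09
    rw [hneg] at hεub
    calc ε ≤ ((n : ℝ) ^ (0.9 : ℝ))⁻¹ := hεub
      _ ≤ 6⁻¹ := this
      _ = 1/6 := by norm_num
  -- bounds on s
  have hs1 : 1 ≤ s := by
    rw [hs]
    exact Nat.ceil_pos.mpr (by positivity)
  have hsle : (s : ℝ) ≤ 1 / (6 * ε) + 1 := by
    rw [hs]
    exact le_of_lt (Nat.ceil_lt_add_one (by positivity))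
  have hkn : k ≤ n := hn ▸ Finset.card_le_card hXP
  -- key nat inequality
  obtain ⟨t, ht⟩ : ∃ t, s = t + 1 := ⟨s - 1, by omega⟩
  have hnat : n.choose s ≤ (n - k).choose s + k * (n - 1).choose (s - 1) := by
    have h2 := choose_sub_bound t k (n - k)
    have h3 : n - k + k = n := by omega
    rw [h3] at h2
    rw [show s - 1 = t from by omega, ht]
    exact h2
  -- identity n * C(n-1,s-1) = C(n,s) * s
  have hid : n * (n - 1).choose (s - 1) = n.choose s * s := by
    have h4 := Nat.add_one_mul_choose_eq (n - 1) (s - 1)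
    have h5 : n - 1 + 1 = n := by omega
    have h6 : s - 1 + 1 = s := by omega
    simpa [Nat.succ_eq_add_one, h5, h6] using h4
  -- counting
  have hcount : ((n - k).choose s : ℕ) ≤
      ((P.powersetCard s).filter (fun S => InConvexPosition S)).card := by
    have hsd : (P \ X).card = n - k := by rw [Finset.card_sdiff_of_subset hXP, hn]
    calc (n - k).choose s = ((P \ X).powersetCard s).card := by
          rw [Finset.card_powersetCard, hsd]
      _ ≤ _ := Finset.card_le_card (by
          intro S hS
          rw [Finset.mem_powersetCard] at hS
          rw [Finset.mem_filter, Finset.mem_powersetCard]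
          exact ⟨⟨hS.1.trans Finset.sdiff_subset, hS.2⟩,
            inConvexPosition_subset hS.1 hXconv⟩)
  -- real arithmetic: 3 k s ≤ n
  have hkR : (k : ℝ) ≤ ε * n := hXcard
  have hsnn : (0 : ℝ) ≤ (s : ℝ) := Nat.cast_nonneg s
  have hknn : (0 : ℝ) ≤ (k : ℝ) := Nat.cast_nonneg k
  have hks : (k : ℝ) * s ≤ (ε * n) * (1 / (6 * ε) + 1) :=
    mul_le_mul hkR hsle hsnn (by positivity)
  have hprod : (ε * n) * (1 / (6 * ε) + 1) = n / 6 + ε * n := by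
    field_simp
  have h3ks : 3 * ((k : ℝ) * s) ≤ n := by
    have hεn : ε * n ≤ n / 6 := by nlinarith
    rw [hprod] at hks
    nlinarith
  -- conclude
  have hA : (n.choose s : ℝ) ≤ ((n - k).choose s : ℝ) + k * ((n - 1).choose (s - 1) : ℝ) := by
    exact_mod_cast hnat
  have hB : (n : ℝ) * ((n - 1).choose (s - 1) : ℝ) = (n.choose s : ℝ) * s := by
    exact_mod_cast hid
  have hCnn : (0 : ℝ) ≤ (n.choose s : ℝ) := Nat.cast_nonneg _
  have hDnn : (0 : ℝ) ≤ ((n - 1).choose (s - 1) : ℝ) := Nat.cast_nonneg _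
  have hgoal : (2 / 3 : ℝ) * (n.choose s : ℝ) ≤ ((n - k).choose s : ℝ) := by
    have e1 := mul_le_mul_of_nonneg_left hA (le_of_lt hnpos)
    rw [mul_add] at e1
    have e2 : (n : ℝ) * ((k : ℝ) * ((n - 1).choose (s - 1) : ℝ))
        = (k : ℝ) * ((n.choose s : ℝ) * s) := by
      linear_combination (k : ℝ) * hB
    rw [e2] at e1
    have e3 : 3 * ((k : ℝ) * ((n.choose s : ℝ) * s)) ≤ (n : ℝ) * (n.choose s : ℝ) := by
      have h := mul_le_mul_of_nonneg_right h3ks hCnn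
      linear_combination h
    have key : (2 / 3 : ℝ) * (n.choose s : ℝ) * n ≤ ((n - k).choose s : ℝ) * n := by
      linarith
    exact le_of_mul_le_mul_right key hnpos
  have hcountR : ((n - k).choose s : ℝ) ≤
      (((P.powersetCard s).filter (fun S => InConvexPosition S)).card : ℝ) := by
    exact_mod_cast hcount
  linarith
end
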